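/- Let N ≥ 3 be odd and let (S,E) be the cycle of length N. Let B in phi with B ≠ ∅. Then |B| = (N−1)/2 if and only if every connected component of the induced subgraph of (S,E) on S∖supp(B) has cardinality 1, with the exception of exactly one component, which has cardinality 2. -/

import Mathlib

/-- The induced subgraph of `adj` on `I` is a path (type `A_m`, `m ≥ 1`):
there is an injective enumeration `f : Fin (m+1) → S` of `I` such that two
elements of `I` are adjacent iff they are consecutive in the enumeration. -/
def IsPathOn {S : Type} [DecidableEq S] (adj : S → S → Prop) (I : Finset S) : Prop :=
  ∃ (m : ℕ) (f : Fin (m + 1) → S), Function.Injective f ∧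
    I = Finset.image f Finset.univ ∧
    ∀ i j : Fin (m + 1), adj (f i) (f j) ↔ ((i : ℕ) + 1 = (j : ℕ) ∨ (j : ℕ) + 1 = (i : ℕ))

/-- The induced subgraph of `adj` on `I` is connected. -/
def ConnOn {S : Type} (adj : S → S → Prop) (I : Finset S) : Prop :=
  ∀ s ∈ I, ∀ t ∈ I, Relation.ReflTransGen (fun a b => a ∈ I ∧ b ∈ I ∧ adj a b) s t

/-- `I ∈ Cal_I^1`: the induced subgraph on `I` is a path and `|I|` is odd. -/
def CalI1 {S : Type} [DecidableEq S] (adj : S → S → Prop) (I : Finset S) : Prop :=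
  IsPathOn adj I ∧ Odd I.card

/-- `I ≺ I'`. -/
def Prec {S : Type} [DecidableEq S] (adj : S → S → Prop) (I I' : Finset S) : Prop :=
  I ⊂ I' ∧ ¬ ConnOn adj (I' \ I)

/-- `I ♠ I'`. -/
def Spade {S : Type} [DecidableEq S] (adj : S → S → Prop) (I I' : Finset S) : Prop :=
  I ∩ I' = ∅ ∧ ¬ ConnOn adj (I ∪ I')

/-- `I^{ev}`: the set of `s ∈ I` such that `I ∖ {s}` is the disjoint union of
`I', I'' ∈ Cal_I^1` with `I' ♠ I''`. -/
def Iev {S : Type} [DecidableEq S] (adj : S → S → Prop) (I : Finset S) : Set S :=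
  {s | s ∈ I ∧ ∃ I' I'' : Finset S, CalI1 adj I' ∧ CalI1 adj I'' ∧
    Spade adj I' I'' ∧ I.erase s = I' ∪ I''}

/-- Property (P0). -/
def P0 {S : Type} [DecidableEq S] (adj : S → S → Prop) (B : Finset (Finset S)) : Prop :=
  ∀ I ∈ B, ∀ I' ∈ B, I = I' ∨ Spade adj I I' ∨ Prec adj I I' ∨ Prec adj I' I

/-- Property (P1). -/
def P1 {S : Type} [DecidableEq S] (adj : S → S → Prop) (B : Finset (Finset S)) : Prop :=
  ∀ I ∈ B, ∃ (k : ℕ) (f : Fin k → Finset S),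
    (∀ j, f j ∈ B ∧ Prec adj (f j) I) ∧
    (∀ j j', j ≠ j' → Disjoint (f j) (f j')) ∧
    Iev adj I ⊆ ⋃ j, ((f j : Finset S) : Set S)

/-- `phi`: finite sets `B` of elements of `Cal_I^1` satisfying (P0) and (P1). -/
def phiSet {S : Type} [DecidableEq S] (adj : S → S → Prop) : Set (Finset (Finset S)) :=
  {B | (∀ I ∈ B, CalI1 adj I) ∧ P0 adj B ∧ P1 adj B}

/-- `supp(B)`. -/
def suppB {S : Type} [DecidableEq S] (B : Finset (Finset S)) : Finset S := B.biUnion id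

/-- `g_s(B)`. -/
def gs {S : Type} [DecidableEq S] (B : Finset (Finset S)) (s : S) : ℕ :=
  (B.filter (fun I => s ∈ I)).card

/-- `e_I = ∑_{s ∈ I} e_s`. -/
def eSum {S : Type} {V : Type} [AddCommGroup V] [Module (ZMod 2) V]
    (e : S → V) (I : Finset S) : V := ∑ s ∈ I, e s

/-- `L_B`: the `F`-span of `{e_I : I ∈ B}`. -/
def LB {S : Type} {V : Type} [AddCommGroup V] [Module (ZMod 2) V]
    (e : S → V) (B : Finset (Finset S)) : Submodule (ZMod 2) V :=
  Submodule.span (ZMod 2) ((fun I => eSum e I) '' (B : Set (Finset S)))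

/-- `eps(B) = ∑_{s ∈ S} ((g_s(B)(g_s(B)+1)/2) mod 2) e_s`. -/
def epsB {S : Type} [DecidableEq S] [Fintype S] {V : Type} [AddCommGroup V]
    [Module (ZMod 2) V] (e : S → V) (B : Finset (Finset S)) : V :=
  ∑ s : S, ((gs B s * (gs B s + 1) / 2 : ℕ) : ZMod 2) • e s

/-- The triple `(V, <,>, e)` (with graph `adj`) is perfect. -/
def IsPerfect {S : Type} [DecidableEq S] [Fintype S] {V : Type} [AddCommGroup V]
    [Module (ZMod 2) V] (adj : S → S → Prop) (e : S → V) : Prop :=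
  (∀ B ∈ phiSet adj,
      (LinearIndependent (ZMod 2) (fun I : {I : Finset S // I ∈ B} => eSum e I.1)) ∧
      (∀ I : Finset S, CalI1 adj I → (eSum e I ∈ LB e B ↔ I ∈ B))) ∧
  (∀ B ∈ phiSet adj, epsB e B ∈ LB e B) ∧
  Set.BijOn (epsB e) (phiSet adj) (⋃ B ∈ phiSet adj, ((LB e B : Submodule (ZMod 2) V) : Set V)) ∧
  (∀ B ∈ phiSet adj, ∀ B' ∈ phiSet adj, epsB e B' ∈ LB e B → ∀ s : S, gs B' s ≤ gs B s)
/-- Adjacency of the cycle of length `N` on `S = ZMod N`. -/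
def cadj (N : ℕ) (i j : ZMod N) : Prop := j = i + 1 ∨ i = j + 1

/-- `V = F^S` for `S = ZMod N`. -/
abbrev Vc (N : ℕ) := ZMod N → ZMod 2

/-- The standard basis vector `e_s`. -/
def eVec (N : ℕ) (s : ZMod N) : Vc N := Pi.single s 1

/-- The line `F·e_S`, where `e_S = ∑_{s ∈ S} e_s`. -/
def radN (N : ℕ) [NeZero N] : Submodule (ZMod 2) (Vc N) :=
  Submodule.span (ZMod 2) {eSum (eVec N) Finset.univ}

/-- `Vbar = V / (F·e_S)`. -/
abbrev VbarN (N : ℕ) [NeZero N] := Vc N ⧸ radN N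

/-- The quotient map `pi : V → Vbar`. -/
def piQ (N : ℕ) [NeZero N] : Vc N →ₗ[ZMod 2] VbarN N := (radN N).mkQ

/-- `ebar_s = pi(e_s)`. -/
def ebar (N : ℕ) [NeZero N] (s : ZMod N) : VbarN N := piQ N (eVec N s)
open scoped Classical in
/-- The connected component of `s` in the induced subgraph of `adj` on `I`. -/
noncomputable def compOf {S : Type} [DecidableEq S] (adj : S → S → Prop)
    (I : Finset S) (s : S) : Finset S :=
  I.filter (fun t => Relation.ReflTransGen (fun a b => a ∈ I ∧ b ∈ I ∧ adj a b) s t)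

/-- `c(I)`: the set of vertex sets of connected components of the induced subgraph on `I`. -/
noncomputable def comps {S : Type} [DecidableEq S] (adj : S → S → Prop)
    (I : Finset S) : Finset (Finset S) :=
  I.image (compOf adj I)

/-- `|c^0(I)|`: the number of connected components of even cardinality. -/
noncomputable def c0card {S : Type} [DecidableEq S] (adj : S → S → Prop)
    (I : Finset S) : ℕ :=
  ((comps adj I).filter (fun C => Even C.card)).card

/-- `V_0 = {e_I : I ⊊ S with |c^0(I)| even}`. -/
def V0set (N : ℕ) [NeZero N] : Set (Vc N) :=
  {v | ∃ I : Finset (ZMod N), I ≠ Finset.univ ∧ Even (c0card (cadj N) I) ∧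
    v = eSum (eVec N) I}

/-- `V_1 = {e_S} ∪ {e_I : ∅ ≠ I ⊊ S with |c^0(I)| odd}`. -/
def V1set (N : ℕ) [NeZero N] : Set (Vc N) :=
  {v | v = eSum (eVec N) Finset.univ ∨ ∃ I : Finset (ZMod N), I ≠ ∅ ∧ I ≠ Finset.univ ∧
    Odd (c0card (cadj N) I) ∧ v = eSum (eVec N) I}
open scoped Classical in
/-- `I^{odd} = I ∖ I^{ev}` (as a `Finset`). -/
noncomputable def IoddF {S : Type} [DecidableEq S] (adj : S → S → Prop)
    (I : Finset S) : Finset S :=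
  I.filter (fun s => s ∉ Iev adj I)

/-- `n_B = |{I ∈ B : ee ⊆ I}|`. -/
def nB {S : Type} [DecidableEq S] (ee : Finset S) (B : Finset (Finset S)) : ℕ :=
  (B.filter (fun I => ee ⊆ I)).card

open scoped Classical in
/-- `B ↦ B^!`: remove the unique `I_B ∈ B` with `|I_B ∩ ee| = 1` when `n_B` is odd;
leave `B` unchanged when `n_B` is even. -/
noncomputable def bangF {S : Type} [DecidableEq S] (ee : Finset S)
    (B : Finset (Finset S)) : Finset (Finset S) :=
  if h : Odd (nB ee B) ∧ ∃ I ∈ B, (I ∩ ee).card = 1 then B.erase h.2.choose else B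

/-- `omega = {B^! : B ∈ phi}`. -/
def omegaSet {S : Type} [DecidableEq S] (adj : S → S → Prop) (ee : Finset S) :
    Set (Finset (Finset S)) :=
  (bangF ee) '' (phiSet adj)

open scoped Classical in
/-- `Btilde`: the unique element of `phi` with `Btilde^! = B`. -/
noncomputable def tildeF {S : Type} [DecidableEq S] (adj : S → S → Prop) (ee : Finset S)
    (C : Finset (Finset S)) : Finset (Finset S) :=
  if h : ∃ B ∈ phiSet adj, bangF ee B = C then h.choose else ∅

/-- `'eps(B) = eps(Btilde)`. -/
noncomputable def epsO {S : Type} [DecidableEq S] [Fintype S] {V : Type} [AddCommGroup V]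
    [Module (ZMod 2) V] (adj : S → S → Prop) (ee : Finset S) (e : S → V)
    (C : Finset (Finset S)) : V :=
  epsB e (tildeF adj ee C)

/-- `B' ⪯ B` on `omega`. -/
def preceqO {S : Type} [DecidableEq S] [Fintype S] {V : Type} [AddCommGroup V]
    [Module (ZMod 2) V] (adj : S → S → Prop) (ee : Finset S) (e : S → V)
    (B' B : Finset (Finset S)) : Prop :=
  ∃ (k : ℕ) (c : ℕ → Finset (Finset S)), c 0 = B' ∧ c k = B ∧
    (∀ i ≤ k, c i ∈ omegaSet adj ee) ∧
    (∀ i < k, epsO adj ee e (c i) ∈ LB e (c (i + 1)))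

/-- The linear form `v ↦ v t + v t'` on `V`. -/
def zeeV (N : ℕ) (t t' : ZMod N) : Vc N →ₗ[ZMod 2] ZMod 2 :=
  (LinearMap.proj t : Vc N →ₗ[ZMod 2] ZMod 2) + (LinearMap.proj t' : Vc N →ₗ[ZMod 2] ZMod 2)

/-- `z_ee : Vbar → F`, the linear map with `z_ee(ebar_s) = 1` iff `s ∈ ee = {t,t'}`. -/
noncomputable def zee (N : ℕ) [NeZero N] (t t' : ZMod N) : VbarN N →ₗ[ZMod 2] ZMod 2 :=
  Submodule.liftQ (radN N) (zeeV N t t') (by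
    rw [radN, Submodule.span_le, Set.singleton_subset_iff]
    have h1 : ∀ u : ZMod N, (eSum (eVec N) Finset.univ) u = 1 := by
      intro u
      simp [eSum, eVec, Finset.sum_apply, Finset.sum_pi_single]
    simp only [SetLike.mem_coe, LinearMap.mem_ker, zeeV, LinearMap.add_apply,
      LinearMap.proj_apply, h1]
    decide)
/-- The maximal elements of a finite family of finsets, under inclusion. -/
def maxElts {S : Type} [DecidableEq S] (C : Finset (Finset S)) : Finset (Finset S) :=
  C.filter (fun I => ∀ I' ∈ C, ¬ I ⊂ I')

/-- `restB B k = B ∖ (B_1 ∪ … ∪ B_k)`: what remains of `B` after removing the first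
`k` layers; the `k`-th layer (`k ≥ 1`) is `B_k = maxElts (restB B (k-1))`. -/
def restB {S : Type} [DecidableEq S] (B : Finset (Finset S)) : ℕ → Finset (Finset S)
  | 0 => B
  | k + 1 => restB B k \ maxElts (restB B k)

/-- The relation `B' ≤ B` on `phi(V)`. -/
def lePhi {S : Type} [DecidableEq S] [Fintype S] {V : Type} [AddCommGroup V]
    [Module (ZMod 2) V] (adj : S → S → Prop) (e : S → V)
    (B' B : Finset (Finset S)) : Prop :=
  ∃ (k : ℕ) (c : ℕ → Finset (Finset S)), c 0 = B' ∧ c k = B ∧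
    (∀ i ≤ k, c i ∈ phiSet adj) ∧
    (∀ i < k, epsB e (c i) ∈ LB e (c (i + 1)))


open Finset

section Arc
variable (N : ℕ)

def arcF (a : ZMod N) (n : ℕ) : Finset (ZMod N) :=
  (Finset.range n).image (fun k : ℕ => a + (k : ZMod N))

lemma mem_arcF {a x : ZMod N} {n : ℕ} : x ∈ arcF N a n ↔ ∃ k, k < n ∧ x = a + (k : ℕ) := by
  simp [arcF, eq_comm]

lemma zc_split (a : ZMod N) {u v w : ℕ} (h : u + v = w) :
    a + (w : ℕ) = a + (u : ℕ) + (v : ℕ) := by subst h; push_cast; ring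

variable [NeZero N]

lemma zc_inj {k k' : ℕ} (hk : k < N) (hk' : k' < N) (h : (k : ZMod N) = (k' : ℕ)) : k = k' := by
  have := congrArg ZMod.val h
  rwa [ZMod.val_cast_of_lt hk, ZMod.val_cast_of_lt hk'] at this

lemma zc_add_inj {a : ZMod N} {k k' : ℕ} (hk : k < N) (hk' : k' < N)
    (h : a + (k : ℕ) = a + (k' : ℕ)) : k = k' :=
  zc_inj N hk hk' (by exact add_left_cancel h)

lemma card_arcF {a : ZMod N} {n : ℕ} (hn : n ≤ N) : (arcF N a n).card = n := by
  rw [arcF, Finset.card_image_of_injOn, Finset.card_range]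
  intro k hk k' hk' h
  exact zc_add_inj N (lt_of_lt_of_le (mem_range.1 hk) hn) (lt_of_lt_of_le (mem_range.1 hk') hn) h

omit [NeZero N] in
lemma arcF_nonempty {a : ZMod N} {n : ℕ} (hn : 1 ≤ n) : (arcF N a n).Nonempty :=
  ⟨a, mem_arcF N |>.2 ⟨0, hn, by simp⟩⟩

omit [NeZero N] in
lemma self_mem_arcF {a : ZMod N} {n : ℕ} (hn : 1 ≤ n) : a ∈ arcF N a n :=
  (mem_arcF N).2 ⟨0, hn, by simp⟩

omit [NeZero N] in
lemma mem_arcF_add {a : ZMod N} {n p : ℕ} (hp : p < n) :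
    a + (p : ℕ) ∈ arcF N a n := (mem_arcF N).2 ⟨p, hp, rfl⟩

lemma not_mem_arcF {a : ZMod N} {n p : ℕ} (hpn : n ≤ p) (hpN : p < N) :
    a + (p : ℕ) ∉ arcF N a n := by
  intro h
  obtain ⟨k, hk, hkk⟩ := (mem_arcF N).1 h
  have := zc_add_inj N hpN (by omega) hkk
  omega

/-- membership with shifted base, coordinates version -/
lemma mem_arcF_shift {a : ZMod N} {p m k : ℕ} (hk : p ≤ k) (hk2 : k < p + m) :
    a + (k : ℕ) ∈ arcF N (a + (p : ℕ)) m := by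
  refine (mem_arcF N).2 ⟨k - p, by omega, ?_⟩
  rw [← zc_split N a (by omega : p + (k - p) = k)]

lemma mem_arcF_shift_iff {a : ZMod N} {p m k : ℕ} (hk : k < N) (hpm : p + m ≤ N) :
    a + (k : ℕ) ∈ arcF N (a + (p : ℕ)) m ↔ p ≤ k ∧ k < p + m := by
  constructor
  · intro h
    obtain ⟨j, hj, hjj⟩ := (mem_arcF N).1 h
    rw [← zc_split N a rfl] at hjj
    have := zc_add_inj N hk (by omega) hjj
    omega
  · rintro ⟨h1, h2⟩; exact mem_arcF_shift N h1 h2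

/-- subset characterization -/
lemma arcF_subset_iff {a b : ZMod N} {m n : ℕ} (hm : 1 ≤ m) (hn : n < N) :
    arcF N b m ⊆ arcF N a n ↔ ∃ p, p + m ≤ n ∧ b = a + (p : ℕ) := by
  constructor
  · intro h
    have hb : b ∈ arcF N a n := h (self_mem_arcF N hm)
    obtain ⟨p, hp, rfl⟩ := (mem_arcF N).1 hb
    refine ⟨p, ?_, rfl⟩
    by_contra hcon
    push_neg at hcon
    have h1 : n - p < m := by omega
    have h2 : a + ((n : ℕ) : ℕ) ∈ arcF N a n := by
      rw [zc_split N a (by omega : p + (n - p) = n)]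
      exact h ((mem_arcF N).2 ⟨n - p, h1, rfl⟩)
    exact not_mem_arcF N le_rfl hn h2
  · rintro ⟨p, hp, rfl⟩
    intro x hx
    obtain ⟨k, hk, rfl⟩ := (mem_arcF N).1 hx
    rw [← zc_split N a rfl]
    exact mem_arcF_add N (by omega)

lemma arcF_union {a : ZMod N} {m m' : ℕ} (h : m + m' ≤ N) :
    arcF N a m ∪ arcF N (a + (m : ℕ)) m' = arcF N a (m + m') := by
  ext x
  simp only [Finset.mem_union, mem_arcF]
  constructor
  · rintro (⟨k, hk, rfl⟩ | ⟨k, hk, rfl⟩)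
    · exact ⟨k, by omega, rfl⟩
    · exact ⟨m + k, by omega, (zc_split N a rfl).symm⟩
  · rintro ⟨k, hk, rfl⟩
    rcases lt_or_ge k m with h1 | h1
    · exact Or.inl ⟨k, h1, rfl⟩
    · exact Or.inr ⟨k - m, by omega, zc_split N a (by omega)⟩

lemma arcF_sdiff {a : ZMod N} {n p m : ℕ} (hpm : p + m ≤ n) (hn : n ≤ N) :
    arcF N a n \ arcF N (a + (p : ℕ)) m =
      arcF N a p ∪ arcF N (a + ((p + m : ℕ) : ℕ)) (n - (p + m)) := by
  ext x
  rw [Finset.mem_sdiff, Finset.mem_union]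
  constructor
  · rintro ⟨hxI, hnot⟩
    obtain ⟨k, hk, rfl⟩ := (mem_arcF N).1 hxI
    rcases lt_or_ge k p with h1 | h1
    · exact Or.inl ((mem_arcF N).2 ⟨k, h1, rfl⟩)
    · rcases lt_or_ge k (p + m) with h2 | h2
      · exact absurd (mem_arcF_shift N h1 h2) hnot
      · exact Or.inr ((mem_arcF N).2 ⟨k - (p + m), by omega, zc_split N a (by omega)⟩)
  · rintro (hx | hx)
    · obtain ⟨k, hk, rfl⟩ := (mem_arcF N).1 hx
      refine ⟨mem_arcF_add N (by omega), fun hmem => ?_⟩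
      have := (mem_arcF_shift_iff N (by omega) (by omega)).1 hmem
      omega
    · obtain ⟨k, hk, rfl⟩ := (mem_arcF N).1 hx
      rw [← zc_split N a rfl]
      refine ⟨mem_arcF_add N (by omega), fun hmem => ?_⟩
      have := (mem_arcF_shift_iff N (by omega) (by omega)).1 hmem
      omega

lemma arcF_disjoint_coords {a : ZMod N} {p m p' m' : ℕ}
    (h : arcF N (a + (p : ℕ)) m ∩ arcF N (a + (p' : ℕ)) m' = ∅)
    (hb : p + m ≤ N) (hb' : p' + m' ≤ N) {k : ℕ} (hk : p ≤ k) (hk2 : k < p + m)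
    (hk3 : p' ≤ k) (hk4 : k < p' + m') : False := by
  have h1 := mem_arcF_shift N hk hk2 (a := a)
  have h2 := mem_arcF_shift N hk3 hk4 (a := a)
  exact Finset.eq_empty_iff_forall_notMem.1 h (a + (k : ℕ)) (Finset.mem_inter.2 ⟨h1, h2⟩)

end Arc

section Conn
open Finset
variable {S : Type} [DecidableEq S] (adj : S → S → Prop)

lemma rtg_mono {I J : Finset S} (h : I ⊆ J) {s t : S}
    (hst : Relation.ReflTransGen (fun a b => a ∈ I ∧ b ∈ I ∧ adj a b) s t) :
    Relation.ReflTransGen (fun a b => a ∈ J ∧ b ∈ J ∧ adj a b) s t :=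
  Relation.ReflTransGen.mono (fun _ _ hab => ⟨h hab.1, h hab.2.1, hab.2.2⟩) _ _ hst

lemma connOn_union_of_adj {A B : Finset S} (hsym : ∀ x y, adj x y → adj y x)
    (hA : ConnOn adj A) (hB : ConnOn adj B) {x y : S} (hx : x ∈ A) (hy : y ∈ B)
    (hadj : adj x y) : ConnOn adj (A ∪ B) := by
  have hsymR : Symmetric (fun a b => a ∈ A ∪ B ∧ b ∈ A ∪ B ∧ adj a b) :=
    fun a b hab => ⟨hab.2.1, hab.1, hsym _ _ hab.2.2⟩
  have bridge : Relation.ReflTransGen (fun a b => a ∈ A ∪ B ∧ b ∈ A ∪ B ∧ adj a b) x y :=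
    Relation.ReflTransGen.single ⟨Finset.mem_union_left _ hx, Finset.mem_union_right _ hy, hadj⟩
  intro s hs t ht
  rw [Finset.mem_union] at hs ht
  have toA : ∀ u ∈ A, Relation.ReflTransGen (fun a b => a ∈ A ∪ B ∧ b ∈ A ∪ B ∧ adj a b) u x :=
    fun u hu => rtg_mono adj Finset.subset_union_left (hA u hu x hx)
  have toB : ∀ u ∈ B, Relation.ReflTransGen (fun a b => a ∈ A ∪ B ∧ b ∈ A ∪ B ∧ adj a b) y u :=
    fun u hu => rtg_mono adj Finset.subset_union_right (hB y hy u hu)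
  rcases hs with hs | hs <;> rcases ht with ht | ht
  · exact rtg_mono adj Finset.subset_union_left (hA s hs t ht)
  · exact ((toA s hs).trans bridge).trans (toB t ht)
  · exact (((@Relation.ReflTransGen.symmetric _ _ ⟨hsymR⟩).symm _ _ (toB s hs)).trans
      ((@Relation.ReflTransGen.symmetric _ _ ⟨hsymR⟩).symm _ _ bridge)).trans
      ((@Relation.ReflTransGen.symmetric _ _ ⟨hsymR⟩).symm _ _ (toA t ht))
  · exact rtg_mono adj Finset.subset_union_right (hB s hs t ht)

lemma not_connOn_of_split {A B : Finset S} {a0 b0 : S} (ha0 : a0 ∈ A) (hb0 : b0 ∈ B)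
    (hd : ∀ x ∈ A, x ∉ B) (hnadj : ∀ x ∈ A, ∀ y ∈ B, ¬ adj x y) :
    ¬ ConnOn adj (A ∪ B) := by
  intro hconn
  have hpath := hconn a0 (Finset.mem_union_left _ ha0) b0 (Finset.mem_union_right _ hb0)
  have key : ∀ u : S, Relation.ReflTransGen (fun a b => a ∈ A ∪ B ∧ b ∈ A ∪ B ∧ adj a b) a0 u →
      u ∈ A ∪ B → u ∈ A := by
    intro u hu
    induction hu with
    | refl => intro _; exact ha0
    | tail _ step ih =>
      intro _
      have hb := ih step.1
      rcases Finset.mem_union.1 step.2.1 with h | h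
      · exact h
      · exact absurd step.2.2 (hnadj _ hb _ h)
  exact hd b0 (key b0 hpath (Finset.mem_union_right _ hb0)) hb0

lemma connOn_mono_set {A B : Finset S} (h : A ⊆ B) (hA : ConnOn adj A) :
    ∀ s ∈ A, ∀ t ∈ A, Relation.ReflTransGen (fun a b => a ∈ B ∧ b ∈ B ∧ adj a b) s t :=
  fun s hs t ht => rtg_mono adj h (hA s hs t ht)

/-- if a connected set C inside A ∪ B meets both parts, with A, B connected, the union is
connected -/
lemma connOn_union_of_bridgeSet {A B C : Finset S} (hsym : ∀ x y, adj x y → adj y x)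
    (hA : ConnOn adj A) (hB : ConnOn adj B) (hC : ConnOn adj C) (hCsub : C ⊆ A ∪ B)
    {x y : S} (hxC : x ∈ C) (hxA : x ∈ A) (hyC : y ∈ C) (hyB : y ∈ B) :
    ConnOn adj (A ∪ B) := by
  have hsymR : Symmetric (fun a b => a ∈ A ∪ B ∧ b ∈ A ∪ B ∧ adj a b) :=
    fun a b hab => ⟨hab.2.1, hab.1, hsym _ _ hab.2.2⟩
  have bridge : Relation.ReflTransGen (fun a b => a ∈ A ∪ B ∧ b ∈ A ∪ B ∧ adj a b) x y :=
    rtg_mono adj hCsub (hC x hxC y hyC)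
  intro s hs t ht
  rw [Finset.mem_union] at hs ht
  have toA : ∀ u ∈ A, Relation.ReflTransGen (fun a b => a ∈ A ∪ B ∧ b ∈ A ∪ B ∧ adj a b) u x :=
    fun u hu => rtg_mono adj Finset.subset_union_left (hA u hu x hxA)
  have toB : ∀ u ∈ B, Relation.ReflTransGen (fun a b => a ∈ A ∪ B ∧ b ∈ A ∪ B ∧ adj a b) y u :=
    fun u hu => rtg_mono adj Finset.subset_union_right (hB y hyB u hu)
  rcases hs with hs | hs <;> rcases ht with ht | ht
  · exact rtg_mono adj Finset.subset_union_left (hA s hs t ht)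
  · exact ((toA s hs).trans bridge).trans (toB t ht)
  · exact (((@Relation.ReflTransGen.symmetric _ _ ⟨hsymR⟩).symm _ _ (toB s hs)).trans
      ((@Relation.ReflTransGen.symmetric _ _ ⟨hsymR⟩).symm _ _ bridge)).trans
      ((@Relation.ReflTransGen.symmetric _ _ ⟨hsymR⟩).symm _ _ (toA t ht))
  · exact rtg_mono adj Finset.subset_union_right (hB s hs t ht)

end Conn

section CycleConn
open Finset
variable (N : ℕ) [NeZero N]

lemma cadj_symm : ∀ x y : ZMod N, cadj N x y → cadj N y x := fun _ _ h => Or.symm h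

lemma cadj_succ (a : ZMod N) (k : ℕ) : cadj N (a + (k : ℕ)) (a + ((k+1 : ℕ) : ℕ)) := by
  left; push_cast; ring

lemma cadj_coords_aux {a : ZMod N} {u v : ℕ} (hu : u < N) (hv : v < N) :
    ((a + (v:ℕ) : ZMod N) = a + (u:ℕ) + 1 ↔ (v = u + 1 ∧ u + 1 < N) ∨ (v = 0 ∧ u + 1 = N)) := by
  rw [show (a + (u:ℕ) + 1 : ZMod N) = a + ((u+1 : ℕ) : ℕ) by push_cast; ring]
  by_cases h : u + 1 = N
  · constructor
    · intro he
      rw [h, ZMod.natCast_self, add_zero] at he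
      have : v = 0 := by
        have : a + (v:ℕ) = a + ((0:ℕ):ℕ) := by simpa using he
        exact zc_add_inj N hv (Nat.pos_of_ne_zero (NeZero.ne N)) this
      exact Or.inr ⟨this, h⟩
    · rintro (⟨_, hlt⟩ | ⟨rfl, _⟩)
      · omega
      · rw [h, ZMod.natCast_self, add_zero]; simp
  · have hlt : u + 1 < N := by omega
    constructor
    · intro he
      exact Or.inl ⟨zc_add_inj N hv hlt he, hlt⟩
    · rintro (⟨rfl, _⟩ | ⟨rfl, hN⟩)
      · rfl
      · omega

lemma cadj_coords {a : ZMod N} {u v : ℕ} (hu : u < N) (hv : v < N) :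
    cadj N (a + (u:ℕ)) (a + (v:ℕ)) ↔
      (v = u + 1 ∧ u + 1 < N) ∨ (v = 0 ∧ u + 1 = N) ∨
      (u = v + 1 ∧ v + 1 < N) ∨ (u = 0 ∧ v + 1 = N) := by
  unfold cadj
  rw [cadj_coords_aux N hu hv, cadj_coords_aux N hv hu]
  tauto

lemma connOn_arcF {a : ZMod N} {n : ℕ} (hn : n ≤ N) : ConnOn (cadj N) (arcF N a n) := by
  have hsymR : Symmetric (fun x y => x ∈ arcF N a n ∧ y ∈ arcF N a n ∧ cadj N x y) :=
    fun x y h => ⟨h.2.1, h.1, Or.symm h.2.2⟩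
  have key : ∀ k, k < n → Relation.ReflTransGen
      (fun x y => x ∈ arcF N a n ∧ y ∈ arcF N a n ∧ cadj N x y) a (a + (k : ℕ)) := by
    intro k
    induction k with
    | zero => intro _; simp [Relation.ReflTransGen.refl]
    | succ k ih =>
      intro hk
      exact Relation.ReflTransGen.tail (ih (by omega))
        ⟨mem_arcF_add N (by omega), mem_arcF_add N hk, cadj_succ N a k⟩
  intro s hs t ht
  obtain ⟨k, hk, rfl⟩ := (mem_arcF N).1 hs
  obtain ⟨l, hl, rfl⟩ := (mem_arcF N).1 ht
  exact ((@Relation.ReflTransGen.symmetric _ _ ⟨hsymR⟩).symm _ _ (key k hk)).trans (key l hl)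

/-- two arcs in a common window, separated on both sides: not connected -/
lemma not_connOn_two_arcs {a : ZMod N} {p m q m' : ℕ} (hm : 1 ≤ m) (hm' : 1 ≤ m')
    (h1 : p + m < q) (h2 : q + m' < N) :
    ¬ ConnOn (cadj N) (arcF N (a + (p:ℕ)) m ∪ arcF N (a + (q:ℕ)) m') := by
  apply not_connOn_of_split (adj := cadj N)
    (ha0 := self_mem_arcF N hm (a := a + (p:ℕ)))
    (hb0 := self_mem_arcF N hm' (a := a + (q:ℕ)))
  · intro x hx hx'
    obtain ⟨k, hk, rfl⟩ := (mem_arcF N).1 hx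
    rw [← zc_split N a rfl] at hx'
    have := (mem_arcF_shift_iff N (by omega) (by omega)).1 hx'
    omega
  · intro x hx y hy
    obtain ⟨k, hk, rfl⟩ := (mem_arcF N).1 hx
    obtain ⟨l, hl, rfl⟩ := (mem_arcF N).1 hy
    rw [← zc_split N a rfl, ← zc_split N a rfl]
    rw [cadj_coords N (by omega) (by omega)]
    omega

end CycleConn

section PathArc
open Finset
variable (N : ℕ) [NeZero N]

lemma isPathOn_arcF {a : ZMod N} {n : ℕ} (hn : 1 ≤ n) (hnN : n + 1 ≤ N) :
    IsPathOn (cadj N) (arcF N a n) := by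
  refine ⟨n - 1, fun i => a + ((i : ℕ) : ZMod N), ?_, ?_, ?_⟩
  · intro i j hij
    have := zc_add_inj N (by omega : (i:ℕ) < N) (by omega : (j:ℕ) < N) hij
    exact Fin.ext this
  · ext x
    rw [mem_arcF]
    simp only [Finset.mem_image, Finset.mem_univ, true_and]
    constructor
    · rintro ⟨k, hk, rfl⟩
      exact ⟨⟨k, by omega⟩, rfl⟩
    · rintro ⟨i, rfl⟩
      exact ⟨i, by omega, rfl⟩
  · intro i j
    rw [cadj_coords N (by omega) (by omega)]
    omega

lemma cadj_neg {x y : ZMod N} : cadj N (-x) (-y) ↔ cadj N x y := by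
  unfold cadj
  constructor
  · rintro (h | h)
    · right; linear_combination h
    · left; linear_combination h
  · rintro (h | h)
    · right; linear_combination h
    · left; linear_combination h

lemma path_forward {m : ℕ} (f : Fin (m+1) → ZMod N)
    (hinj : Function.Injective f)
    (hadj : ∀ i j : Fin (m+1), cadj N (f i) (f j) ↔ ((i:ℕ)+1 = (j:ℕ) ∨ (j:ℕ)+1 = (i:ℕ)))
    (hm : 1 ≤ m)
    (h1 : f ⟨1, by omega⟩ = f ⟨0, by omega⟩ + 1) :
    ∀ k, ∀ (hk : k < m+1), f ⟨k, hk⟩ = f ⟨0, by omega⟩ + ((k : ℕ) : ZMod N) := by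
  intro k
  induction k using Nat.strong_induction_on with
  | _ k ih =>
    intro hk
    match k, hk with
    | 0, hk => simp
    | 1, hk => simpa using h1
    | (j+2), hk =>
      have hj1 := ih (j+1) (by omega) (by omega)
      have hj := ih j (by omega) (by omega)
      have hc : cadj N (f ⟨j+1, by omega⟩) (f ⟨j+2, hk⟩) := (hadj _ _).2 (Or.inl rfl)
      rcases hc with hc | hc
      · rw [hc, hj1]; push_cast; ring
      · exfalso
        have h2 : f ⟨j+2, hk⟩ = f ⟨j, by omega⟩ := by
          rw [hj1] at hc
          rw [hj]
          push_cast at hc ⊢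
          linear_combination -hc
        have := hinj h2
        simp only [Fin.mk.injEq] at this
        omega

lemma path_bound {m : ℕ} (f : Fin (m+1) → ZMod N)
    (hadj : ∀ i j : Fin (m+1), cadj N (f i) (f j) ↔ ((i:ℕ)+1 = (j:ℕ) ∨ (j:ℕ)+1 = (i:ℕ)))
    (hm : 2 ≤ m)
    (hfk : ∀ k, ∀ (hk : k < m+1), f ⟨k, hk⟩ = f ⟨0, by omega⟩ + ((k : ℕ) : ZMod N)) :
    m + 1 ≠ N := by
  intro hN
  have hz : ((m : ℕ) : ZMod N) + 1 = 0 := by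
    have : ((m + 1 : ℕ) : ZMod N) = 0 := by rw [hN]; exact ZMod.natCast_self N
    push_cast at this
    linear_combination this
  have hmem : cadj N (f ⟨m, by omega⟩) (f ⟨0, by omega⟩) := by
    left
    rw [hfk m (by omega), add_assoc, hz, add_zero]
  have := (hadj _ _).1 hmem
  simp only at this
  omega

lemma neg_image_arcF {b : ZMod N} {n : ℕ} (hn : 1 ≤ n) :
    (arcF N b n).image (fun x => -x) = arcF N (-b - ((n-1 : ℕ) : ZMod N)) n := by
  ext x
  simp only [Finset.mem_image, mem_arcF]
  constructor
  · rintro ⟨y, ⟨k, hk, rfl⟩, rfl⟩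
    refine ⟨n - 1 - k, by omega, ?_⟩
    have h1 : ((n - 1 : ℕ) : ZMod N) = ((n - 1 - k : ℕ) : ZMod N) + ((k : ℕ) : ZMod N) := by
      rw [← Nat.cast_add]; congr 1; omega
    rw [h1]; ring
  · rintro ⟨k, hk, rfl⟩
    refine ⟨b + ((n - 1 - k : ℕ) : ZMod N), ⟨n - 1 - k, by omega, rfl⟩, ?_⟩
    have h1 : ((n - 1 : ℕ) : ZMod N) = ((n - 1 - k : ℕ) : ZMod N) + ((k : ℕ) : ZMod N) := by
      rw [← Nat.cast_add]; congr 1; omega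
    rw [h1]; ring

lemma isPathOn_arcF_form (hN3 : 3 ≤ N) {I : Finset (ZMod N)}
    (hp : IsPathOn (cadj N) I) :
    ∃ a n, 1 ≤ n ∧ n + 1 ≤ N ∧ I = arcF N a n ∧ I.card = n := by
  obtain ⟨m, f, hinj, hIm, hadj⟩ := hp
  have hcard : I.card = m + 1 := by
    rw [hIm, Finset.card_image_of_injective _ hinj, Finset.card_univ, Fintype.card_fin]
  have hle : m + 1 ≤ N := by
    have h1 : I.card ≤ Finset.univ.card := Finset.card_le_univ I
    rwa [hcard, Finset.card_univ, ZMod.card N] at h1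
  rcases Nat.eq_zero_or_pos m with rfl | hm
  · refine ⟨f ⟨0, by omega⟩, 1, le_rfl, by omega, ?_, hcard⟩
    rw [hIm]
    ext x
    simp only [Finset.mem_image, Finset.mem_univ, true_and, mem_arcF]
    constructor
    · rintro ⟨i, rfl⟩
      refine ⟨0, by omega, ?_⟩
      have : i = ⟨0, by omega⟩ := Fin.ext (by omega)
      rw [this]; simp
    · rintro ⟨k, hk, rfl⟩
      refine ⟨⟨0, by omega⟩, ?_⟩
      have : k = 0 := by omega
      subst this; simp
  · have hc01 : cadj N (f ⟨0, by omega⟩) (f ⟨1, by omega⟩) := (hadj _ _).2 (Or.inl rfl)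
    have himg : ∀ (hfk : ∀ k, ∀ (hk : k < m+1), f ⟨k, hk⟩ = f ⟨0, by omega⟩ + ((k : ℕ) : ZMod N)),
        I = arcF N (f ⟨0, by omega⟩) (m + 1) := by
      intro hfk
      rw [hIm]
      ext x
      simp only [Finset.mem_image, Finset.mem_univ, true_and, mem_arcF]
      constructor
      · rintro ⟨i, rfl⟩
        exact ⟨(i : ℕ), i.2, by rw [← hfk (i:ℕ) i.2]⟩
      · rintro ⟨k, hk, rfl⟩
        exact ⟨⟨k, hk⟩, hfk k hk⟩
    rcases hc01 with hc | hc
    · have hfk := path_forward N f hinj hadj hm hc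
      have hne : m + 1 ≤ N - 1 ∨ m = 1 := by
        rcases Nat.lt_or_ge m 2 with h | h
        · right; omega
        · left; have := path_bound N f hadj h hfk; omega
      refine ⟨f ⟨0, by omega⟩, m + 1, by omega, ?_, himg hfk, hcard⟩
      rcases hne with h | h <;> omega
    · -- reverse direction: use g = -f
      set g : Fin (m+1) → ZMod N := fun i => -(f i) with hg
      have hginj : Function.Injective g := fun i j hij => hinj (neg_injective hij)
      have hgadj : ∀ i j : Fin (m+1), cadj N (g i) (g j) ↔ ((i:ℕ)+1 = (j:ℕ) ∨ (j:ℕ)+1 = (i:ℕ)) := by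
        intro i j
        rw [hg]
        simp only
        rw [cadj_neg N]
        exact hadj i j
      have hg1 : g ⟨1, by omega⟩ = g ⟨0, by omega⟩ + 1 := by
        simp only [hg]
        linear_combination hc
      have hgk := path_forward N g hginj hgadj hm hg1
      have hne : m + 1 ≤ N - 1 ∨ m = 1 := by
        rcases Nat.lt_or_ge m 2 with h | h
        · right; omega
        · left; have := path_bound N g hgadj h hgk; omega
      -- image of g is an arc; I = image of (-g)
      have hgimg : I.image (fun x => -x) = arcF N (g ⟨0, by omega⟩) (m + 1) := by
        have : I.image (fun x => -x) = Finset.image g Finset.univ := by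
          rw [hIm, Finset.image_image]
          rfl
        rw [this]
        ext x
        simp only [Finset.mem_image, Finset.mem_univ, true_and, mem_arcF]
        constructor
        · rintro ⟨i, rfl⟩
          exact ⟨(i : ℕ), i.2, by rw [← hgk (i:ℕ) i.2]⟩
        · rintro ⟨k, hk, rfl⟩
          exact ⟨⟨k, hk⟩, hgk k hk⟩
      have hI2 : I = arcF N (-(g ⟨0, by omega⟩) - ((m : ℕ) : ZMod N)) (m + 1) := by
        have h2 : (I.image (fun x => -x)).image (fun x => -x) = I := by
          rw [Finset.image_image]
          simp [Function.comp]
        rw [← h2, hgimg, neg_image_arcF N (by omega)]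
        congr 2
      refine ⟨_, m + 1, by omega, ?_, hI2, hcard⟩
      rcases hne with h | h <;> omega

lemma calI1_arcF (hN3 : 3 ≤ N) (hNodd : Odd N) {I : Finset (ZMod N)}
    (hI : CalI1 (cadj N) I) :
    ∃ a n, I = arcF N a n ∧ I.card = n ∧ Odd n ∧ 1 ≤ n ∧ n + 2 ≤ N := by
  obtain ⟨a, n, h1, h2, h3, h4⟩ := isPathOn_arcF_form N hN3 hI.1
  refine ⟨a, n, h3, h4, ?_, h1, ?_⟩
  · rw [← h4]; exact hI.2
  · have : Odd n := by rw [← h4]; exact hI.2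
    obtain ⟨u, hu⟩ := this
    obtain ⟨v, hv⟩ := hNodd
    omega

end PathArc

section SpadePrec
open Finset
variable (N : ℕ) [NeZero N]

omit [NeZero N] in
lemma arcF_zero (x : ZMod N) : arcF N x 0 = ∅ := by simp [arcF]

omit [NeZero N] in
lemma arcF_one (x : ZMod N) : arcF N x 1 = {x} := by
  ext y; simp [arcF]

omit [NeZero N] in
lemma arcF_base (a : ZMod N) (n : ℕ) : arcF N (a + ((0:ℕ) : ZMod N)) n = arcF N a n := by
  norm_num

lemma arcF_disjoint_of_coords {a : ZMod N} {p m q m' : ℕ}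
    (h : ∀ k, ¬ (p ≤ k ∧ k < p + m ∧ q ≤ k ∧ k < q + m')) (hpm : p + m ≤ N) (hqm : q + m' ≤ N) :
    arcF N (a + (p:ℕ)) m ∩ arcF N (a + (q:ℕ)) m' = ∅ := by
  rw [Finset.eq_empty_iff_forall_notMem]
  intro x hx
  rw [Finset.mem_inter] at hx
  obtain ⟨k, hk, rfl⟩ := (mem_arcF N).1 hx.1
  have h1 : a + (p:ℕ) + (k:ℕ) = a + ((p + k : ℕ) : ZMod N) := (zc_split N a rfl).symm
  have h2 := hx.2
  rw [h1] at h2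
  have := (mem_arcF_shift_iff N (by omega) (by omega)).1 h2
  exact h (p + k) (by omega)

/-- Spade of two separated arcs in a window -/
lemma spade_of_coords {a : ZMod N} {p m q m' : ℕ} (hm : 1 ≤ m) (hm' : 1 ≤ m')
    (h1 : p + m < q) (h2 : q + m' < N) :
    Spade (cadj N) (arcF N (a + (p:ℕ)) m) (arcF N (a + (q:ℕ)) m') := by
  constructor
  · exact arcF_disjoint_of_coords N (fun k => by omega) (by omega) (by omega)
  · exact not_connOn_two_arcs N hm hm' h1 h2

/-- consume a spade between two arcs in a common window -/
lemma spade_sep {a : ZMod N} {p m q m' n : ℕ} (hm : 1 ≤ m) (hm' : 1 ≤ m')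
    (hpm : p + m ≤ n) (hqm : q + m' ≤ n) (hnN : n ≤ N)
    (hsp : Spade (cadj N) (arcF N (a + (p:ℕ)) m) (arcF N (a + (q:ℕ)) m')) :
    (∀ k, ¬ (p ≤ k ∧ k < p + m ∧ q ≤ k ∧ k < q + m')) ∧ q ≠ p + m ∧ p ≠ q + m' := by
  refine ⟨fun k hk => arcF_disjoint_coords N hsp.1 (by omega) (by omega) hk.1 hk.2.1 hk.2.2.1 hk.2.2.2, ?_, ?_⟩
  · rintro rfl
    apply hsp.2
    have : arcF N (a + (p:ℕ)) m ∪ arcF N (a + (p:ℕ) + (m:ℕ)) m' = arcF N (a + (p:ℕ)) (m + m') :=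
      arcF_union N (by omega)
    rw [← zc_split N a rfl] at this
    rw [this]
    exact connOn_arcF N (by omega)
  · rintro rfl
    apply hsp.2
    have : arcF N (a + (q:ℕ)) m' ∪ arcF N (a + (q:ℕ) + (m':ℕ)) m = arcF N (a + (q:ℕ)) (m' + m) :=
      arcF_union N (by omega)
    rw [← zc_split N a rfl] at this
    rw [Finset.union_comm, this]
    exact connOn_arcF N (by omega)

/-- the cell just after an arc is not in any set spade to it -/
lemma spade_not_end_mem {a : ZMod N} {n : ℕ} (hn : 1 ≤ n) (hnN : n < N) {J : Finset (ZMod N)}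
    (hJ : ConnOn (cadj N) J)
    (hsp : ¬ ConnOn (cadj N) (arcF N a n ∪ J)) : a + (n:ℕ) ∉ J := by
  intro hmem
  apply hsp
  refine connOn_union_of_adj (cadj N) (cadj_symm N) (connOn_arcF N (by omega)) hJ
    (mem_arcF_add N (by omega : n - 1 < n)) hmem ?_
  have := cadj_succ N a (n-1)
  rwa [show n - 1 + 1 = n by omega] at this

/-- Prec characterization in coordinates -/
lemma prec_coords {a : ZMod N} {n p m : ℕ} (hm : 1 ≤ m) (hn : 1 ≤ n)
    (hpm : p + m ≤ n) (hnN : n < N) :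
    Prec (cadj N) (arcF N (a + (p:ℕ)) m) (arcF N a n) ↔ 1 ≤ p ∧ p + m + 1 ≤ n := by
  constructor
  · rintro ⟨hsub, hnc⟩
    by_contra hcon
    apply hnc
    rw [arcF_sdiff N hpm (by omega)]
    rcases (by omega : p = 0 ∨ p + m = n) with rfl | hpmn
    · rw [arcF_zero, Finset.empty_union]
      exact connOn_arcF N (by omega)
    · rw [show n - (p + m) = 0 from by omega, arcF_zero, Finset.union_empty]
      exact connOn_arcF N (by omega)
  · rintro ⟨hp, hpm1⟩
    constructor
    · rw [Finset.ssubset_def]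
      constructor
      · exact (arcF_subset_iff N hm hnN).2 ⟨p, by omega, rfl⟩
      · intro hsub
        have := hsub (self_mem_arcF N hn)
        obtain ⟨k, hk, hkk⟩ := (mem_arcF N).1 this
        rw [← zc_split N a rfl] at hkk
        have h0 : a + ((0:ℕ) : ZMod N) = a + ((p + k : ℕ) : ZMod N) := by simpa using hkk
        have := zc_add_inj N (by omega) (by omega) h0
        omega
    · rw [arcF_sdiff N hpm (by omega)]
      have h0 : arcF N a p = arcF N (a + ((0:ℕ) : ZMod N)) p := (arcF_base N a p).symm
      rw [h0]
      exact not_connOn_two_arcs N (by omega) (by omega) (by omega) (by omega)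

end SpadePrec

section IevChar
open Finset
variable (N : ℕ) [NeZero N]

lemma iev_arcF (hN3 : 3 ≤ N) (hNodd : Odd N) {a : ZMod N} {n : ℕ} (hn : Odd n)
    (hnN : n + 2 ≤ N) {s : ZMod N} :
    s ∈ Iev (cadj N) (arcF N a n) ↔ ∃ j, j < n ∧ Odd j ∧ s = a + (j:ℕ) := by
  have hn1 : 1 ≤ n := hn.pos
  constructor
  · rintro ⟨hsI, I', I'', hI', hI'', hsp, herase⟩
    obtain ⟨j, hj, rfl⟩ := (mem_arcF N).1 hsI
    refine ⟨j, hj, ?_, rfl⟩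
    -- the erase set
    have herase2 : (arcF N a n).erase (a + (j:ℕ)) =
        arcF N a j ∪ arcF N (a + ((j+1 : ℕ) : ZMod N)) (n - (j+1)) := by
      rw [Finset.erase_eq]
      have : ({a + ((j:ℕ) : ZMod N)} : Finset (ZMod N)) = arcF N (a + ((j:ℕ) : ZMod N)) 1 :=
        (arcF_one N _).symm
      rw [this, arcF_sdiff N (by omega) (by omega)]
    -- exclude j = 0 and j = n - 1 : erase would be connected
    have hconn_contra : ∀ (b : ZMod N) (k : ℕ), k ≤ N →
        (arcF N a n).erase (a + (j:ℕ)) = arcF N b k → False := by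
      intro b k hk heq
      apply hsp.2
      rw [← herase, heq]
      exact connOn_arcF N hk
    have hj0 : j ≠ 0 := by
      rintro rfl
      refine hconn_contra (a + ((1:ℕ) : ZMod N)) (n - 1) (by omega) ?_
      rw [herase2, arcF_zero, Finset.empty_union]
    have hjn : j ≠ n - 1 := by
      rintro rfl
      refine hconn_contra a (n - 1) (by omega) ?_
      rw [herase2]
      have : n - (n - 1 + 1) = 0 := by omega
      rw [this, arcF_zero, Finset.union_empty]
    -- now 1 ≤ j ≤ n - 2
    set A := arcF N a j with hA
    set Bb := arcF N (a + ((j+1 : ℕ) : ZMod N)) (n - (j+1)) with hB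
    have hAconn : ConnOn (cadj N) A := connOn_arcF N (by omega)
    have hBconn : ConnOn (cadj N) Bb := connOn_arcF N (by omega)
    obtain ⟨b', m', hIa', hIc', hIo', hI1', hIN'⟩ := calI1_arcF N hN3 hNodd hI'
    obtain ⟨b'', m'', hIa'', hIc'', hIo'', hI1'', hIN''⟩ := calI1_arcF N hN3 hNodd hI''
    have hI'conn : ConnOn (cadj N) I' := by rw [hIa']; exact connOn_arcF N (by omega)
    have hI''conn : ConnOn (cadj N) I'' := by rw [hIa'']; exact connOn_arcF N (by omega)
    have hUnion : I' ∪ I'' = A ∪ Bb := by rw [← herase, herase2]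
    have hI'ne : I'.Nonempty := by rw [hIa']; exact arcF_nonempty N hI1'
    have hI''ne : I''.Nonempty := by rw [hIa'']; exact arcF_nonempty N hI1''
    have hdisj : ∀ x ∈ I', x ∉ I'' := by
      intro x hx hx'
      exact Finset.eq_empty_iff_forall_notMem.1 hsp.1 x (Finset.mem_inter.2 ⟨hx, hx'⟩)
    -- a connected subset of I' ∪ I'' lies in one part
    have hpart : ∀ C : Finset (ZMod N), ConnOn (cadj N) C → C ⊆ I' ∪ I'' →
        C ⊆ I' ∨ C ⊆ I'' := by
      intro C hC hCsub
      by_contra hcon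
      push_neg at hcon
      obtain ⟨x, hxC, hxI'⟩ := Finset.not_subset.1 hcon.1
      obtain ⟨y, hyC, hyI''⟩ := Finset.not_subset.1 hcon.2
      have hxI'' : x ∈ I'' := by
        rcases Finset.mem_union.1 (hCsub hxC) with h | h
        · exact absurd h hxI'
        · exact h
      have hyI' : y ∈ I' := by
        rcases Finset.mem_union.1 (hCsub hyC) with h | h
        · exact h
        · exact absurd h hyI''
      exact hsp.2 (connOn_union_of_bridgeSet (cadj N) (cadj_symm N) hI'conn hI''conn hC
        hCsub hyC hyI' hxC hxI'')
    have hAsub : A ⊆ I' ∪ I'' := by rw [hUnion]; exact Finset.subset_union_left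
    have hBsub : Bb ⊆ I' ∪ I'' := by rw [hUnion]; exact Finset.subset_union_right
    have hAne : A.Nonempty := arcF_nonempty N (by omega)
    have hBne : Bb.Nonempty := arcF_nonempty N (by omega)
    have hABdisj : ∀ x ∈ A, x ∉ Bb := by
      intro x hx hx'
      obtain ⟨k, hk, rfl⟩ := (mem_arcF N).1 hx
      have := (mem_arcF_shift_iff N (by omega : k < N)
        (by omega : (j+1) + (n - (j+1)) ≤ N)).1 hx'
      omega
    have hcardA : A.card = j := card_arcF N (by omega)
    have memU : ∀ x, x ∈ I' ∪ I'' ↔ x ∈ A ∪ Bb := fun x => by rw [hUnion]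
    rcases hpart A hAconn hAsub with hAI' | hAI''
    · rcases hpart Bb hBconn hBsub with hBI' | hBI''
      · exfalso
        obtain ⟨x, hx⟩ := hI''ne
        rcases Finset.mem_union.1 ((memU x).1 (Finset.mem_union_right _ hx)) with h | h
        · exact hdisj x (hAI' h) hx
        · exact hdisj x (hBI' h) hx
      · have hI'A : I' ⊆ A := by
          intro x hx
          rcases Finset.mem_union.1 ((memU x).1 (Finset.mem_union_left _ hx)) with h | h
          · exact h
          · exact absurd hx (fun hxx => hdisj x hxx (hBI'' h))
        have : I' = A := Finset.Subset.antisymm hI'A hAI'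
        have hodd := hI'.2
        rw [this, hcardA] at hodd
        exact hodd
    · rcases hpart Bb hBconn hBsub with hBI' | hBI''
      · have hI''A : I'' ⊆ A := by
          intro x hx
          rcases Finset.mem_union.1 ((memU x).1 (Finset.mem_union_right _ hx)) with h | h
          · exact h
          · exact absurd (hBI' h) (fun hxx => hdisj x hxx hx)
        have : I'' = A := Finset.Subset.antisymm hI''A hAI''
        have hodd := hI''.2
        rw [this, hcardA] at hodd
        exact hodd
      · exfalso
        obtain ⟨x, hx⟩ := hI'ne
        rcases Finset.mem_union.1 ((memU x).1 (Finset.mem_union_left _ hx)) with h | h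
        · exact hdisj x hx (hAI'' h)
        · exact hdisj x hx (hBI'' h)
  · rintro ⟨j, hj, hjodd, rfl⟩
    have hj1 : 1 ≤ j := hjodd.pos
    have hj2 : j + 2 ≤ n := by
      obtain ⟨u, hu⟩ := hn; obtain ⟨v, hv⟩ := hjodd; omega
    refine ⟨mem_arcF_add N hj, arcF N a j, arcF N (a + ((j+1 : ℕ) : ZMod N)) (n - (j+1)), ?_, ?_, ?_, ?_⟩
    · exact ⟨isPathOn_arcF N hj1 (by omega), by rw [card_arcF N (by omega)]; exact hjodd⟩
    · refine ⟨isPathOn_arcF N (by omega) (by omega), ?_⟩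
      rw [card_arcF N (by omega)]
      obtain ⟨u, hu⟩ := hn; obtain ⟨v, hv⟩ := hjodd
      exact ⟨u - v - 1, by omega⟩
    · have := spade_of_coords N (a := a) (p := 0) (m := j) (q := j + 1) (m' := n - (j+1))
        hj1 (by omega) (by omega) (by omega)
      rwa [arcF_base] at this
    · rw [Finset.erase_eq]
      have : ({a + ((j:ℕ) : ZMod N)} : Finset (ZMod N)) = arcF N (a + ((j:ℕ) : ZMod N)) 1 :=
        (arcF_one N _).symm
      rw [this, arcF_sdiff N (by omega) (by omega)]
end IevChar

section Count
open Finset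

lemma odd_count_range (n : ℕ) : ((Finset.range n).filter (fun j => j % 2 = 1)).card = n / 2 := by
  induction n with
  | zero => simp
  | succ n ih =>
    rw [Finset.range_add_one, Finset.filter_insert]
    by_cases h : n % 2 = 1
    · rw [if_pos h, Finset.card_insert_of_notMem (by simp)]
      omega
    · rw [if_neg h]
      omega

lemma odd_count_Ico (p m : ℕ) : ((Finset.Ico p (p + m)).filter (fun j => j % 2 = 1)).card ≤ (m + 1) / 2 := by
  have : ((Finset.Ico p (p + m)).filter (fun j => j % 2 = 1)).card ≤ (Finset.range ((m+1)/2)).card := by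
    apply Finset.card_le_card_of_injOn (fun j => (j - p) / 2)
    · intro j hj
      simp only [Finset.coe_filter, Finset.mem_Ico, Set.mem_setOf_eq] at hj
      simp only [Finset.coe_range, Set.mem_Iio]
      omega
    · intro j hj j' hj' hee
      simp only [Finset.coe_filter, Finset.mem_Ico, Set.mem_setOf_eq] at hj hj'
      have hee' : (j - p) / 2 = (j' - p) / 2 := hee
      omega
  simpa using this

end Count

section Laminar
open Finset
def tc {S : Type} [DecidableEq S] (B : Finset (Finset S)) (I : Finset S) : ℕ :=
  (B.filter (fun K => K ⊆ I)).card

def chl {S : Type} [DecidableEq S] (B : Finset (Finset S)) (I : Finset S) :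
    Finset (Finset S) :=
  B.filter (fun J => J ⊂ I ∧ ∀ J' ∈ B, J ⊂ J' → ¬ J' ⊂ I)

lemma mem_chl {S : Type} [DecidableEq S] {B : Finset (Finset S)} {I J : Finset S} :
    J ∈ chl B I ↔ J ∈ B ∧ (J ⊂ I ∧ ∀ J' ∈ B, J ⊂ J' → ¬ J' ⊂ I) := Finset.mem_filter

lemma mem_maxElts {S : Type} [DecidableEq S] {C : Finset (Finset S)} {I : Finset S} :
    I ∈ maxElts C ↔ I ∈ C ∧ ∀ I' ∈ C, ¬ I ⊂ I' := Finset.mem_filter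

lemma mem_tc_filter {S : Type} [DecidableEq S] {B : Finset (Finset S)} {I K : Finset S} :
    K ∈ B.filter (fun K => K ⊆ I) ↔ K ∈ B ∧ K ⊆ I := Finset.mem_filter

variable (N : ℕ) [NeZero N] {B : Finset (Finset (ZMod N))}

lemma phi_mem_nonempty (hB : B ∈ phiSet (cadj N)) {I : Finset (ZMod N)} (hI : I ∈ B) :
    I.Nonempty := by
  have hodd := (hB.1 I hI).2
  rw [← Finset.card_pos]
  rcases hodd with ⟨u, hu⟩
  omega

/-- from P0: a subset relation between members is strict or equality, and distinct
non-nested members are disjoint -/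
lemma phi_disj_of_ne (hB : B ∈ phiSet (cadj N)) {I K : Finset (ZMod N)} (hI : I ∈ B)
    (hK : K ∈ B) (hne : I ≠ K) (hnsub : ¬ I ⊂ K) (hnsub' : ¬ K ⊂ I) : I ∩ K = ∅ := by
  rcases hB.2.1 I hI K hK with h | h | h | h
  · exact absurd h hne
  · exact h.1
  · exact absurd h.1 hnsub
  · exact absurd h.1 hnsub'

lemma phi_spade_of_ne (hB : B ∈ phiSet (cadj N)) {I K : Finset (ZMod N)} (hI : I ∈ B)
    (hK : K ∈ B) (hne : I ≠ K) (hnsub : ¬ I ⊂ K) (hnsub' : ¬ K ⊂ I) :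
    Spade (cadj N) I K := by
  rcases hB.2.1 I hI K hK with h | h | h | h
  · exact absurd h hne
  · exact h
  · exact absurd h.1 hnsub
  · exact absurd h.1 hnsub'

lemma phi_ssub_of_sub (hB : B ∈ phiSet (cadj N)) {I K : Finset (ZMod N)} (hI : I ∈ B)
    (hK : K ∈ B) (hsub : K ⊆ I) (hne : K ≠ I) : K ⊂ I :=
  Finset.ssubset_iff_subset_ne.2 ⟨hsub, hne⟩

lemma exists_chl_above (hB : B ∈ phiSet (cadj N)) {I K : Finset (ZMod N)} (hI : I ∈ B)
    (hK : K ∈ B) (hKI : K ⊂ I) : ∃ J ∈ chl B I, K ⊆ J := by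
  have hTne : (B.filter (fun J => K ⊆ J ∧ J ⊂ I)).Nonempty :=
    ⟨K, Finset.mem_filter.2 ⟨hK, Finset.Subset.refl K, hKI⟩⟩
  obtain ⟨M, hM, hmax⟩ := Finset.exists_maximal hTne
  rw [Finset.mem_filter] at hM
  refine ⟨M, ?_, hM.2.1⟩
  rw [mem_chl]
  refine ⟨hM.1, hM.2.2, ?_⟩
  intro J' hJ' hMJ' hJ'I
  exact (not_le_of_gt (show M < J' from hMJ')) (hmax (Finset.mem_filter.2 ⟨hJ', hM.2.1.trans hMJ'.subset, hJ'I⟩) hMJ'.subset)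

lemma exists_max_above (hB : B ∈ phiSet (cadj N)) {K : Finset (ZMod N)} (hK : K ∈ B) :
    ∃ J ∈ maxElts B, K ⊆ J := by
  have hTne : (B.filter (fun J => K ⊆ J)).Nonempty :=
    ⟨K, Finset.mem_filter.2 ⟨hK, Finset.Subset.refl K⟩⟩
  obtain ⟨M, hM, hmax⟩ := Finset.exists_maximal hTne
  rw [Finset.mem_filter] at hM
  refine ⟨M, ?_, hM.2⟩
  rw [mem_maxElts]
  refine ⟨hM.1, ?_⟩
  intro I' hI' hMI'
  exact (not_le_of_gt (show M < I' from hMI')) (hmax (Finset.mem_filter.2 ⟨hI', hM.2.trans hMI'.subset⟩) hMI'.subset)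

lemma chl_mem_B {I J : Finset (ZMod N)} (hJ : J ∈ chl B I) : J ∈ B :=
  (mem_chl.1 hJ).1

lemma chl_ssub {I J : Finset (ZMod N)} (hJ : J ∈ chl B I) : J ⊂ I :=
  (mem_chl.1 hJ).2.1

lemma chl_spade (hB : B ∈ phiSet (cadj N)) {I J J' : Finset (ZMod N)}
    (hJ : J ∈ chl B I) (hJ' : J' ∈ chl B I) (hne : J ≠ J') : Spade (cadj N) J J' := by
  rw [mem_chl] at hJ hJ'
  apply phi_spade_of_ne N hB hJ.1 hJ'.1 hne
  · intro hss
    exact hJ.2.2 J' hJ'.1 hss hJ'.2.1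
  · intro hss
    exact hJ'.2.2 J hJ.1 hss hJ.2.1

lemma maxElts_spade (hB : B ∈ phiSet (cadj N)) {J J' : Finset (ZMod N)}
    (hJ : J ∈ maxElts B) (hJ' : J' ∈ maxElts B) (hne : J ≠ J') : Spade (cadj N) J J' := by
  rw [mem_maxElts] at hJ hJ'
  exact phi_spade_of_ne N hB hJ.1 hJ'.1 hne (hJ.2 J' hJ'.1) (hJ'.2 J hJ.1)

lemma tc_rec (hB : B ∈ phiSet (cadj N)) {I : Finset (ZMod N)} (hI : I ∈ B) :
    tc B I = 1 + ∑ J ∈ chl B I, tc B J := by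
  have hpart : B.filter (fun K => K ⊆ I) =
      insert I ((chl B I).biUnion (fun J => B.filter (fun K => K ⊆ J))) := by
    ext K
    simp only [mem_tc_filter, Finset.mem_insert, Finset.mem_biUnion]
    constructor
    · rintro ⟨hKB, hKI⟩
      by_cases hKe : K = I
      · exact Or.inl hKe
      · obtain ⟨J, hJ, hKJ⟩ := exists_chl_above N hB hI hKB (phi_ssub_of_sub N hB hI hKB hKI hKe)
        exact Or.inr ⟨J, hJ, ⟨hKB, hKJ⟩⟩
    · rintro (rfl | ⟨J, hJ, hKJ⟩)
      · exact ⟨hI, Finset.Subset.refl K⟩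
      · exact ⟨hKJ.1, hKJ.2.trans (chl_ssub N hJ).subset⟩
  have hnotmem : I ∉ (chl B I).biUnion (fun J => B.filter (fun K => K ⊆ J)) := by
    rw [Finset.mem_biUnion]
    rintro ⟨J, hJ, hIJ⟩
    rw [mem_tc_filter] at hIJ
    exact absurd (lt_of_lt_of_le (chl_ssub N hJ) hIJ.2) (lt_irrefl J)
  have hdisj : ∀ J ∈ chl B I, ∀ J' ∈ chl B I, J ≠ J' →
      Disjoint (B.filter (fun K => K ⊆ J)) (B.filter (fun K => K ⊆ J')) := by
    intro J hJ J' hJ' hne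
    rw [Finset.disjoint_left]
    intro K hK hK'
    rw [Finset.mem_filter] at hK hK'
    have hsp := chl_spade N hB hJ hJ' hne
    obtain ⟨x, hx⟩ := phi_mem_nonempty N hB hK.1
    exact Finset.eq_empty_iff_forall_notMem.1 hsp.1 x
      (Finset.mem_inter.2 ⟨hK.2 hx, hK'.2 hx⟩)
  rw [tc, hpart, Finset.card_insert_of_notMem hnotmem, Finset.card_biUnion hdisj]
  rw [add_comm]
  rfl

end Laminar

section Geometry
open Finset
variable (N : ℕ) [NeZero N] {B : Finset (Finset (ZMod N))}

lemma chl_coords (hN3 : 3 ≤ N) (hNodd : Odd N) (hB : B ∈ phiSet (cadj N))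
    {I : Finset (ZMod N)} (hI : I ∈ B) {a : ZMod N} {n : ℕ} (hIa : I = arcF N a n)
    (hcard : I.card = n) (hnN : n + 2 ≤ N) {J : Finset (ZMod N)} (hJ : J ∈ chl B I) :
    ∃ p, 1 ≤ p ∧ p + J.card + 1 ≤ n ∧ J = arcF N (a + (p : ℕ)) J.card := by
  have hJB := chl_mem_B N hJ
  have hJI := chl_ssub N hJ
  obtain ⟨b, m, hJa, hJc, hJo, hJ1, hJN⟩ := calI1_arcF N hN3 hNodd (hB.1 J hJB)
  have hn1 : 1 ≤ n := by
    rw [← hcard]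
    exact Finset.card_pos.2 (phi_mem_nonempty N hB hI)
  have hsub : J ⊆ I := hJI.subset
  rw [hJa, hIa] at hsub
  obtain ⟨p, hpm, rfl⟩ := (arcF_subset_iff N hJ1 (by omega)).1 hsub
  have hprec : Prec (cadj N) J I := by
    rcases hB.2.1 J hJB I hI with h | h | h | h
    · exact absurd h hJI.ne
    · exfalso
      obtain ⟨x, hx⟩ := phi_mem_nonempty N hB hJB
      exact Finset.eq_empty_iff_forall_notMem.1 h.1 x
        (Finset.mem_inter.2 ⟨hx, hJI.subset hx⟩)
    · exact h
    · exact absurd h.1 (by intro hc; exact absurd (hc.trans hJI) (lt_irrefl I))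
  rw [hJa, hIa] at hprec
  have := (prec_coords N hJ1 hn1 hpm (by omega)).1 hprec
  exact ⟨p, this.1, by omega, by rw [hJc]; exact hJa⟩

lemma chl_sum (hN3 : 3 ≤ N) (hNodd : Odd N) (hB : B ∈ phiSet (cadj N))
    {I : Finset (ZMod N)} (hI : I ∈ B) {a : ZMod N} {n : ℕ} (hIa : I = arcF N a n)
    (hcard : I.card = n) (hnodd : Odd n) (hnN : n + 2 ≤ N) :
    ∑ J ∈ chl B I, (J.card + 1) = n - 1 := by
  classical
  have hn1 : 1 ≤ n := hnodd.pos
  -- skolemize the coordinates of the children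
  have hsk : ∀ J : Finset (ZMod N), ∃ p, J ∈ chl B I →
      (1 ≤ p ∧ p + J.card + 1 ≤ n ∧ J = arcF N (a + (p : ℕ)) J.card) := by
    intro J
    by_cases hJ : J ∈ chl B I
    · obtain ⟨p, h1, h2, h3⟩ := chl_coords N hN3 hNodd hB hI hIa hcard hnN hJ
      exact ⟨p, fun _ => ⟨h1, h2, h3⟩⟩
    · exact ⟨0, fun h => absurd h hJ⟩
  choose pf hpf using hsk
  have hJcard : ∀ J ∈ chl B I, 1 ≤ J.card ∧ Odd J.card := by
    intro J hJ
    have := (hB.1 J (chl_mem_B N hJ)).2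
    refine ⟨?_, this⟩
    exact Finset.card_pos.2 (phi_mem_nonempty N hB (chl_mem_B N hJ))
  -- upper bound via packing of inflated intervals
  have hdisjI : ∀ J ∈ chl B I, ∀ J' ∈ chl B I, J ≠ J' →
      Disjoint (Finset.Ico (pf J) (pf J + J.card + 1))
        (Finset.Ico (pf J') (pf J' + J'.card + 1)) := by
    intro J hJ J' hJ' hne
    have h1 := hpf J hJ
    have h2 := hpf J' hJ'
    have hsp := chl_spade N hB hJ hJ' hne
    rw [h1.2.2, h2.2.2] at hsp
    have hsep := spade_sep N (hJcard J hJ).1 (hJcard J' hJ').1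
      (by omega : pf J + J.card ≤ n) (by omega : pf J' + J'.card ≤ n) (by omega) hsp
    rw [Finset.disjoint_left]
    intro k hk hk'
    rw [Finset.mem_Ico] at hk hk'
    have e1 := hsep.1 k
    have e2 := hsep.1 (pf J)
    have e3 := hsep.1 (pf J')
    have e4 := hsep.2.1
    have e5 := hsep.2.2
    have m1 := (hJcard J hJ).1
    have m2 := (hJcard J' hJ').1
    omega
  have hUB : ∑ J ∈ chl B I, (J.card + 1) ≤ n - 1 := by
    have step1 : ∑ J ∈ chl B I, (J.card + 1) =
        ∑ J ∈ chl B I, (Finset.Ico (pf J) (pf J + J.card + 1)).card := by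
      refine Finset.sum_congr rfl fun J hJ => ?_
      rw [Nat.card_Ico]
      omega
    rw [step1, ← Finset.card_biUnion hdisjI]
    have hsub : (chl B I).biUnion (fun J => Finset.Ico (pf J) (pf J + J.card + 1)) ⊆
        Finset.Ico 1 n := by
      intro k hk
      rw [Finset.mem_biUnion] at hk
      obtain ⟨J, hJ, hkJ⟩ := hk
      have := hpf J hJ
      rw [Finset.mem_Ico] at hkJ ⊢
      omega
    have := Finset.card_le_card hsub
    rwa [Nat.card_Ico] at this
  -- lower bound via Iev covering
  set IevF : Finset (ZMod N) :=
    (arcF N a n).filter (fun s => s ∈ Iev (cadj N) (arcF N a n)) with hIevF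
  have hIevEq : IevF = ((Finset.range n).filter (fun j => j % 2 = 1)).image
      (fun j => a + (j : ℕ)) := by
    ext s
    rw [hIevF, Finset.mem_filter, Finset.mem_image]
    constructor
    · rintro ⟨hs, hsIev⟩
      obtain ⟨j, hj, hjo, rfl⟩ := (iev_arcF N hN3 hNodd hnodd hnN).1 hsIev
      exact ⟨j, Finset.mem_filter.2 ⟨Finset.mem_range.2 hj, Nat.odd_iff.1 hjo⟩, rfl⟩
    · rintro ⟨j, hj, rfl⟩
      rw [Finset.mem_filter, Finset.mem_range] at hj
      have hsIev : a + ((j:ℕ) : ZMod N) ∈ Iev (cadj N) (arcF N a n) :=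
        (iev_arcF N hN3 hNodd hnodd hnN).2 ⟨j, hj.1, Nat.odd_iff.2 hj.2, rfl⟩
      exact ⟨hsIev.1, hsIev⟩
  have hIevCard : IevF.card = n / 2 := by
    rw [hIevEq, Finset.card_image_of_injOn, odd_count_range]
    intro j hj j' hj' he
    simp only [Finset.coe_filter, Finset.mem_range, Set.mem_setOf_eq] at hj hj'
    exact zc_add_inj N (by omega) (by omega) he
  have hcov : IevF ⊆ (chl B I).biUnion (fun J => IevF ∩ J) := by
    intro s hs
    have hsIev : s ∈ Iev (cadj N) I := by
      rw [hIevF, Finset.mem_filter] at hs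
      rw [hIa]
      exact hs.2
    obtain ⟨k, f, hf, hfd, hfsub⟩ := hB.2.2 I hI
    have := hfsub hsIev
    rw [Set.mem_iUnion] at this
    obtain ⟨j, hj⟩ := this
    have hfj := hf j
    obtain ⟨J, hJ, hsubJ⟩ := exists_chl_above N hB hI hfj.1 hfj.2.1
    rw [Finset.mem_biUnion]
    refine ⟨J, hJ, Finset.mem_inter.2 ⟨hs, hsubJ (by exact_mod_cast hj)⟩⟩
  have hcap : ∀ J ∈ chl B I, (IevF ∩ J).card ≤ (J.card + 1) / 2 := by
    intro J hJ
    have hJc := hpf J hJ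
    have hsub2 : IevF ∩ J ⊆ ((Finset.Ico (pf J) (pf J + J.card)).filter
        (fun j => j % 2 = 1)).image (fun j => a + (j : ℕ)) := by
      intro x hx
      rw [Finset.mem_inter] at hx
      rw [hIevEq, Finset.mem_image] at hx
      obtain ⟨⟨j, hjm, rfl⟩, hxJ⟩ := hx
      rw [Finset.mem_filter, Finset.mem_range] at hjm
      rw [hJc.2.2] at hxJ
      have := (mem_arcF_shift_iff N (by omega) (by omega)).1 hxJ
      rw [Finset.mem_image]
      exact ⟨j, Finset.mem_filter.2 ⟨Finset.mem_Ico.2 ⟨this.1, this.2⟩, hjm.2⟩, rfl⟩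
    calc (IevF ∩ J).card ≤ _ := Finset.card_le_card hsub2
      _ ≤ ((Finset.Ico (pf J) (pf J + J.card)).filter (fun j => j % 2 = 1)).card :=
        Finset.card_image_le
      _ ≤ (J.card + 1) / 2 := odd_count_Ico (pf J) J.card
  have hLB : n / 2 ≤ ∑ J ∈ chl B I, (J.card + 1) / 2 := by
    calc n / 2 = IevF.card := hIevCard.symm
      _ ≤ ((chl B I).biUnion (fun J => IevF ∩ J)).card := Finset.card_le_card hcov
      _ ≤ ∑ J ∈ chl B I, (IevF ∩ J).card := Finset.card_biUnion_le
      _ ≤ ∑ J ∈ chl B I, (J.card + 1) / 2 := Finset.sum_le_sum hcap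
  -- combine
  have hsum2 : ∑ J ∈ chl B I, (J.card + 1) = 2 * ∑ J ∈ chl B I, (J.card + 1) / 2 := by
    rw [Finset.mul_sum]
    refine Finset.sum_congr rfl fun J hJ => ?_
    obtain ⟨u, hu⟩ := (hJcard J hJ).2
    omega
  obtain ⟨u, hu⟩ := hnodd
  omega

lemma tc_formula (hN3 : 3 ≤ N) (hNodd : Odd N) (hB : B ∈ phiSet (cadj N)) :
    ∀ I ∈ B, 2 * tc B I = I.card + 1 := by
  suffices H : ∀ r, ∀ I ∈ B, I.card ≤ r → 2 * tc B I = I.card + 1 by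
    exact fun I hI => H I.card I hI le_rfl
  intro r
  induction r with
  | zero =>
    intro I hI hle
    have := Finset.card_pos.2 (phi_mem_nonempty N hB hI)
    omega
  | succ r ih =>
    intro I hI hle
    obtain ⟨a, n, hIa, hcard, hodd, h1, hN2⟩ := calI1_arcF N hN3 hNodd (hB.1 I hI)
    rw [tc_rec N hB hI, Nat.mul_add, Finset.mul_sum]
    have hstep : ∑ J ∈ chl B I, 2 * tc B J = ∑ J ∈ chl B I, (J.card + 1) := by
      refine Finset.sum_congr rfl fun J hJ => ?_
      refine ih J (chl_mem_B N hJ) ?_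
      have := Finset.card_lt_card (chl_ssub N hJ)
      omega
    rw [hstep, chl_sum N hN3 hNodd hB hI hIa hcard hodd hN2, hcard]
    omega

lemma count_master (hN3 : 3 ≤ N) (hNodd : Odd N) (hB : B ∈ phiSet (cadj N)) :
    2 * B.card = (suppB B).card + (maxElts B).card := by
  classical
  have hpart : B = (maxElts B).biUnion (fun I => B.filter (fun K => K ⊆ I)) := by
    ext K
    rw [Finset.mem_biUnion]
    constructor
    · intro hK
      obtain ⟨J, hJ, hKJ⟩ := exists_max_above N hB hK
      exact ⟨J, hJ, mem_tc_filter.2 ⟨hK, hKJ⟩⟩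
    · rintro ⟨J, hJ, hKJ⟩
      exact (mem_tc_filter.1 hKJ).1
  have hdisj : ∀ J ∈ maxElts B, ∀ J' ∈ maxElts B, J ≠ J' →
      Disjoint (B.filter (fun K => K ⊆ J)) (B.filter (fun K => K ⊆ J')) := by
    intro J hJ J' hJ' hne
    have hsp := maxElts_spade N hB hJ hJ' hne
    rw [Finset.disjoint_left]
    intro K hK hK'
    rw [mem_tc_filter] at hK hK'
    obtain ⟨x, hx⟩ := phi_mem_nonempty N hB hK.1
    exact Finset.eq_empty_iff_forall_notMem.1 hsp.1 x
      (Finset.mem_inter.2 ⟨hK.2 hx, hK'.2 hx⟩)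
  have hcardB : B.card = ∑ I ∈ maxElts B, tc B I := by
    conv_lhs => rw [hpart]
    exact Finset.card_biUnion hdisj
  have hsupp : suppB B = (maxElts B).biUnion id := by
    ext s
    rw [suppB, Finset.mem_biUnion, Finset.mem_biUnion]
    constructor
    · rintro ⟨K, hK, hs⟩
      obtain ⟨J, hJ, hKJ⟩ := exists_max_above N hB hK
      exact ⟨J, hJ, hKJ hs⟩
    · rintro ⟨J, hJ, hs⟩
      exact ⟨J, (mem_maxElts.1 hJ).1, hs⟩
  have hsuppdisj : ∀ J ∈ maxElts B, ∀ J' ∈ maxElts B, J ≠ J' → Disjoint (id J) (id J') := by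
    intro J hJ J' hJ' hne
    have hsp := maxElts_spade N hB hJ hJ' hne
    rw [Finset.disjoint_left]
    intro x hx hx'
    exact Finset.eq_empty_iff_forall_notMem.1 hsp.1 x (Finset.mem_inter.2 ⟨hx, hx'⟩)
  have hsuppcard : (suppB B).card = ∑ I ∈ maxElts B, I.card := by
    rw [hsupp, Finset.card_biUnion hsuppdisj]
    rfl
  rw [hcardB, Finset.mul_sum, hsuppcard]
  have : ∑ I ∈ maxElts B, 2 * tc B I = ∑ I ∈ maxElts B, (I.card + 1) := by
    refine Finset.sum_congr rfl fun I haverageI => ?_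
    exact tc_formula N hN3 hNodd hB I (mem_maxElts.1 haverageI).1
  rw [this, Finset.sum_add_distrib, Finset.sum_const, smul_eq_mul, mul_one]

end Geometry

section Comps
open Finset
variable (N : ℕ) [NeZero N]

lemma mem_compOf {D : Finset (ZMod N)} {s t : ZMod N} :
    t ∈ compOf (cadj N) D s ↔ t ∈ D ∧
      Relation.ReflTransGen (fun a b => a ∈ D ∧ b ∈ D ∧ cadj N a b) s t := by
  classical
  exact Finset.mem_filter

lemma compOf_self_mem {D : Finset (ZMod N)} {s : ZMod N} (hs : s ∈ D) :
    s ∈ compOf (cadj N) D s := (mem_compOf N).2 ⟨hs, Relation.ReflTransGen.refl⟩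

lemma compOf_subset {D : Finset (ZMod N)} {s : ZMod N} : compOf (cadj N) D s ⊆ D :=
  fun t ht => ((mem_compOf N).1 ht).1

lemma compOf_eq_of_mem {D : Finset (ZMod N)} {s t : ZMod N}
    (ht : t ∈ compOf (cadj N) D s) : compOf (cadj N) D s = compOf (cadj N) D t := by
  have hsymR : Symmetric (fun a b => a ∈ D ∧ b ∈ D ∧ cadj N a b) :=
    fun a b hab => ⟨hab.2.1, hab.1, Or.symm hab.2.2⟩
  have hst := ((mem_compOf N).1 ht).2
  ext u
  rw [mem_compOf, mem_compOf]
  constructor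
  · rintro ⟨hu, hsu⟩
    exact ⟨hu, ((@Relation.ReflTransGen.symmetric _ _ ⟨hsymR⟩).symm _ _ hst).trans hsu⟩
  · rintro ⟨hu, htu⟩
    exact ⟨hu, hst.trans htu⟩

lemma mem_comps {D C : Finset (ZMod N)} :
    C ∈ comps (cadj N) D ↔ ∃ s ∈ D, compOf (cadj N) D s = C := Finset.mem_image

lemma comps_sum_card (D : Finset (ZMod N)) : ∑ C ∈ comps (cadj N) D, C.card = D.card := by
  classical
  have hpart : D = (comps (cadj N) D).biUnion id := by
    ext s
    rw [Finset.mem_biUnion]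
    constructor
    · intro hs
      exact ⟨compOf (cadj N) D s, (mem_comps N).2 ⟨s, hs, rfl⟩, compOf_self_mem N hs⟩
    · rintro ⟨C, hC, hs⟩
      obtain ⟨t, ht, rfl⟩ := (mem_comps N).1 hC
      exact compOf_subset N hs
  have hdisj : ∀ C ∈ comps (cadj N) D, ∀ C' ∈ comps (cadj N) D, C ≠ C' →
      Disjoint (id C) (id C') := by
    intro C hC C' hC' hne
    obtain ⟨t, ht, rfl⟩ := (mem_comps N).1 hC
    obtain ⟨t', ht', rfl⟩ := (mem_comps N).1 hC'
    rw [Finset.disjoint_left]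
    intro x hx hx'
    exact hne ((compOf_eq_of_mem N hx).trans (compOf_eq_of_mem N hx').symm)
  conv_rhs => rw [hpart]
  exact (Finset.card_biUnion hdisj).symm

lemma comps_nonempty {D C : Finset (ZMod N)} (hC : C ∈ comps (cadj N) D) : C.Nonempty := by
  obtain ⟨s, hs, rfl⟩ := (mem_comps N).1 hC
  exact ⟨s, compOf_self_mem N hs⟩

/-- the component of `s` in `D ≠ univ` is a maximal run -/
lemma comp_run {D : Finset (ZMod N)} (hD : D ≠ Finset.univ) {s : ZMod N} (hs : s ∈ D) :
    ∃ c g, 1 ≤ g ∧ g + 1 ≤ N ∧ compOf (cadj N) D s = arcF N c g ∧ arcF N c g ⊆ D ∧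
      (c - 1) ∉ D ∧ c + (g : ℕ) ∉ D := by
  classical
  have hex : ∃ t : ZMod N, t ∉ D := by
    by_contra h
    push_neg at h
    exact hD (Finset.eq_univ_iff_forall.2 h)
  obtain ⟨t, ht⟩ := hex
  have hvalcast : ∀ x : ZMod N, ((x.val : ℕ) : ZMod N) = x := fun x => ZMod.natCast_rightInverse x
  have hPex : ∃ k : ℕ, s + (k : ℕ) ∉ D := by
    refine ⟨(t - s).val, ?_⟩
    rw [hvalcast]
    rwa [show s + (t - s) = t by ring]
  have hQex : ∃ l : ℕ, s - ((l + 1 : ℕ) : ZMod N) ∉ D := by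
    have hst : s ≠ t := fun h => ht (h ▸ hs)
    have hv1 : 1 ≤ (s - t).val := by
      rcases Nat.eq_zero_or_pos (s - t).val with h | h
      · exfalso
        have : s - t = 0 := by
          rw [← hvalcast (s - t), h]
          simp
        exact hst (by linear_combination this)
      · exact h
    refine ⟨(s - t).val - 1, ?_⟩
    rw [show (s - t).val - 1 + 1 = (s - t).val by omega, hvalcast]
    rwa [show s - (s - t) = t by ring]
  set r := Nat.find hPex with hrdef
  have hrspec : s + ((r : ℕ) : ZMod N) ∉ D := Nat.find_spec hPex
  have hrmin : ∀ k, k < r → s + ((k : ℕ) : ZMod N) ∈ D := by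
    intro k hk
    have := Nat.find_min hPex hk
    simpa using this
  have hr1 : 1 ≤ r := by
    rcases Nat.eq_zero_or_pos r with h | h
    · exfalso; apply hrspec; rw [h]; simpa using hs
    · exact h
  set l := Nat.find hQex with hldef
  have hlspec : s - ((l + 1 : ℕ) : ZMod N) ∉ D := Nat.find_spec hQex
  have hlmin : ∀ k, k < l → s - ((k + 1 : ℕ) : ZMod N) ∈ D := by
    intro k hk
    have := Nat.find_min hQex hk
    simpa using this
  set c := s - ((l : ℕ) : ZMod N) with hcdef
  set g := l + r with hgdef
  have hcoord : ∀ i, i ≤ l → c + ((i : ℕ) : ZMod N) = s - (((l - i : ℕ) : ℕ) : ZMod N) := by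
    intro i hi
    have hsplit : ((l : ℕ) : ZMod N) = ((l - i : ℕ) : ZMod N) + ((i : ℕ) : ZMod N) := by
      rw [← Nat.cast_add]; congr 1; omega
    rw [hcdef, hsplit]; ring
  have hcoord2 : ∀ i, l ≤ i → c + ((i : ℕ) : ZMod N) = s + (((i - l : ℕ) : ℕ) : ZMod N) := by
    intro i hi
    have hsplit : ((i : ℕ) : ZMod N) = ((l : ℕ) : ZMod N) + ((i - l : ℕ) : ZMod N) := by
      rw [← Nat.cast_add]; congr 1; omega
    rw [hcdef, hsplit]; ring
  have harcD : ∀ i, i < g → c + ((i : ℕ) : ZMod N) ∈ D := by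
    intro i hi
    rcases Nat.lt_or_ge i l with h | h
    · rw [hcoord i (by omega)]
      have h2 : l - i - 1 < l := by omega
      have := hlmin (l - i - 1) h2
      rwa [show l - i - 1 + 1 = l - i by omega] at this
    · rw [hcoord2 i h]
      exact hrmin (i - l) (by omega)
  have harcsub : arcF N c g ⊆ D := by
    intro x hx
    obtain ⟨k, hk, rfl⟩ := (mem_arcF N).1 hx
    exact harcD k hk
  have hgN : g + 1 ≤ N := by
    by_contra hcon
    push_neg at hcon
    apply hD
    rw [Finset.eq_univ_iff_forall]
    intro x
    have : x = c + (((x - c).val : ℕ) : ZMod N) := by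
      rw [hvalcast]; ring
    rw [this]
    exact harcD (x - c).val (by have := ZMod.val_lt (x - c); omega)
  have hcm1 : c - 1 ∉ D := by
    have : c - 1 = s - ((l + 1 : ℕ) : ZMod N) := by
      rw [hcdef]; push_cast; ring
    rwa [this]
  have hcg : c + ((g : ℕ) : ZMod N) ∉ D := by
    have : c + ((g : ℕ) : ZMod N) = s + ((r : ℕ) : ZMod N) := by
      rw [hcdef, hgdef]; push_cast; ring
    rwa [this]
  have hsarc : s ∈ arcF N c g := by
    have : s = c + ((l : ℕ) : ZMod N) := by rw [hcdef]; ring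
    rw [this]
    exact mem_arcF_add N (by omega)
  refine ⟨c, g, by omega, hgN, ?_, harcsub, hcm1, hcg⟩
  apply Finset.Subset.antisymm
  · intro u hu
    have hru := ((mem_compOf N).1 hu).2
    clear hu
    induction hru with
    | refl => exact hsarc
    | tail hprev step ih =>
      rename_i b v
      have hbarc := ih
      obtain ⟨i, hi, rfl⟩ := (mem_arcF N).1 hbarc
      have hvD := step.2.1
      have hveq : v = c + (((v - c).val : ℕ) : ZMod N) := by rw [hvalcast]; ring
      set w := (v - c).val with hwdef
      have hwN : w < N := ZMod.val_lt (v - c)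
      have hcadj : cadj N (c + ((i : ℕ) : ZMod N)) (c + ((w : ℕ) : ZMod N)) := by
        rw [← hveq]; exact step.2.2
      rw [cadj_coords N (by omega) hwN] at hcadj
      rcases hcadj with ⟨hw, hiN⟩ | ⟨hw, hiN⟩ | ⟨hi2, hwN2⟩ | ⟨hi0, hwN2⟩
      · -- w = i + 1
        rcases Nat.lt_or_ge (i + 1) g with h2 | h2
        · rw [hveq, hw]; exact mem_arcF_add N h2
        · exfalso
          have : i + 1 = g := by omega
          apply hcg
          rw [← this, ← hw, ← hveq]
          exact hvD
      · -- w = 0 and i + 1 = N : v = c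
        rw [hveq, hw]
        simpa using self_mem_arcF N (by omega : 1 ≤ g)
      · -- i = w + 1
        rw [hveq]
        exact mem_arcF_add N (by omega)
      · -- i = 0 and w + 1 = N : v = c - 1
        exfalso
        apply hcm1
        have : c + ((w : ℕ) : ZMod N) = c - 1 := by
          have hz : ((w : ℕ) : ZMod N) + 1 = 0 := by
            have : ((w + 1 : ℕ) : ZMod N) = 0 := by rw [hwN2]; exact ZMod.natCast_self N
            push_cast at this
            linear_combination this
          linear_combination hz
        rw [← this, ← hveq]
        exact hvD
  · intro x hx
    rw [mem_compOf]
    refine ⟨harcsub hx, ?_⟩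
    exact rtg_mono (cadj N) harcsub (connOn_arcF N (by omega) s hsarc x hx)

end Comps

section Bij
open Finset
variable (N : ℕ) [NeZero N]

open scoped Classical in
noncomputable def arcEnd (I : Finset (ZMod N)) : ZMod N :=
  if h : ∃ q : ZMod N × ℕ, I = arcF N q.1 q.2 ∧ I.card = q.2 ∧ 1 ≤ q.2 ∧ q.2 + 2 ≤ N
  then h.choose.1 + ((h.choose.2 : ℕ) : ZMod N) else 0

lemma arcEnd_spec {B : Finset (Finset (ZMod N))} (hN3 : 3 ≤ N) (hNodd : Odd N)
    (hB : B ∈ phiSet (cadj N)) {I : Finset (ZMod N)} (hI : I ∈ B) :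
    ∃ a n, I = arcF N a n ∧ I.card = n ∧ 1 ≤ n ∧ n + 2 ≤ N ∧
      arcEnd N I = a + ((n : ℕ) : ZMod N) := by
  obtain ⟨a, n, h1, h2, _, h4, h5⟩ := calI1_arcF N hN3 hNodd (hB.1 I hI)
  have hex : ∃ q : ZMod N × ℕ, I = arcF N q.1 q.2 ∧ I.card = q.2 ∧ 1 ≤ q.2 ∧ q.2 + 2 ≤ N :=
    ⟨(a, n), h1, h2, h4, h5⟩
  obtain ⟨e1, e2, e3, e4⟩ := hex.choose_spec
  exact ⟨hex.choose.1, hex.choose.2, e1, e2, e3, e4, by rw [arcEnd, dif_pos hex]⟩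

variable {B : Finset (Finset (ZMod N))}

lemma mem_supp_of_mem {K : Finset (ZMod N)} (hK : K ∈ B) {x : ZMod N} (hx : x ∈ K) :
    x ∈ suppB B := by
  rw [suppB, Finset.mem_biUnion]
  exact ⟨K, hK, hx⟩

lemma end_in_D (hN3 : 3 ≤ N) (hNodd : Odd N) (hB : B ∈ phiSet (cadj N))
    {I : Finset (ZMod N)} (hI : I ∈ maxElts B) {a : ZMod N} {n : ℕ}
    (hIa : I = arcF N a n) (hn : 1 ≤ n) (hnN : n + 2 ≤ N) :
    a + ((n : ℕ) : ZMod N) ∈ Finset.univ \ suppB B := by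
  rw [Finset.mem_sdiff]
  refine ⟨Finset.mem_univ _, ?_⟩
  intro hmem
  rw [suppB, Finset.mem_biUnion] at hmem
  obtain ⟨K, hK, hxK⟩ := hmem
  obtain ⟨J, hJ, hKJ⟩ := exists_max_above N hB hK
  have hxJ : a + ((n : ℕ) : ZMod N) ∈ J := hKJ hxK
  by_cases hJI : J = I
  · rw [hJI, hIa] at hxJ
    exact not_mem_arcF N le_rfl (by omega) hxJ
  · have hsp := maxElts_spade N hB hI hJ (fun h => hJI h.symm)
    obtain ⟨b, m, hJa, _, _, hm1, hmN⟩ :=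
      calI1_arcF N hN3 hNodd (hB.1 J (mem_maxElts.1 hJ).1)
    have hJconn : ConnOn (cadj N) J := by rw [hJa]; exact connOn_arcF N (by omega)
    have hnc : ¬ ConnOn (cadj N) (arcF N a n ∪ J) := by
      rw [← hIa]; exact hsp.2
    exact spade_not_end_mem N hn (by omega) hJconn hnc hxJ

lemma comps_card_eq (hN3 : 3 ≤ N) (hNodd : Odd N) (hB : B ∈ phiSet (cadj N))
    (hne : B.Nonempty) :
    (comps (cadj N) (Finset.univ \ suppB B)).card = (maxElts B).card := by
  classical
  set D := Finset.univ \ suppB B with hD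
  have hDuniv : D ≠ Finset.univ := by
    intro h
    obtain ⟨I, hI⟩ := hne
    obtain ⟨x, hx⟩ := phi_mem_nonempty N hB hI
    have hxs : x ∈ suppB B := mem_supp_of_mem N hI hx
    have : x ∈ D := h ▸ Finset.mem_univ x
    rw [hD, Finset.mem_sdiff] at this
    exact this.2 hxs
  symm
  apply Finset.card_bij (fun I _ => compOf (cadj N) D (arcEnd N I))
  · -- maps into comps
    intro I hI
    obtain ⟨a, n, hIa, hIc, hn1, hnN, hend⟩ :=
      arcEnd_spec N hN3 hNodd hB (mem_maxElts.1 hI).1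
    rw [mem_comps]
    refine ⟨arcEnd N I, ?_, rfl⟩
    rw [hend, hD]
    exact end_in_D N hN3 hNodd hB hI hIa hn1 hnN
  · -- injective
    intro I hI I' hI' heq
    obtain ⟨a, n, hIa, hIc, hn1, hnN, hend⟩ :=
      arcEnd_spec N hN3 hNodd hB (mem_maxElts.1 hI).1
    obtain ⟨a', n', hIa', hIc', hn1', hnN', hend'⟩ :=
      arcEnd_spec N hN3 hNodd hB (mem_maxElts.1 hI').1
    set w := arcEnd N I with hw
    set w' := arcEnd N I' with hw'
    have hwD : w ∈ D := by rw [hend, hD]; exact end_in_D N hN3 hNodd hB hI hIa hn1 hnN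
    have hw'D : w' ∈ D := by rw [hend', hD]; exact end_in_D N hN3 hNodd hB hI' hIa' hn1' hnN'
    obtain ⟨c, g, hg1, hgN, hrun, hsubD, hbl, hbr⟩ := comp_run N hDuniv hwD
    -- w is the left end of its component
    have hleft : ∀ (u : ZMod N) (b : ZMod N) (k : ℕ), 1 ≤ k → k + 2 ≤ N →
        u = b + ((k : ℕ) : ZMod N) → (∀ x ∈ arcF N b k, x ∈ suppB B) →
        u ∈ arcF N c g → u = c := by
      intro u b k hk1 hkN hu hbsupp huarc
      obtain ⟨i, hi, hui⟩ := (mem_arcF N).1 huarc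
      rcases Nat.eq_zero_or_pos i with rfl | hipos
      · rw [hui]; simp
      · exfalso
        have hprev : c + ((i - 1 : ℕ) : ZMod N) ∈ D := hsubD (mem_arcF_add N (by omega))
        have hprev_eq : c + ((i - 1 : ℕ) : ZMod N) = b + ((k - 1 : ℕ) : ZMod N) := by
          have e1 : ((i : ℕ) : ZMod N) = ((i - 1 : ℕ) : ZMod N) + 1 := by
            rw [show (i : ℕ) = (i - 1) + 1 by omega]; push_cast; ring
          have e2 : ((k : ℕ) : ZMod N) = ((k - 1 : ℕ) : ZMod N) + 1 := by
            rw [show (k : ℕ) = (k - 1) + 1 by omega]; push_cast; ring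
          rw [hu, e2] at hui
          rw [e1] at hui
          linear_combination -hui
        have hsupp : b + ((k - 1 : ℕ) : ZMod N) ∈ suppB B :=
          hbsupp _ (mem_arcF_add N (by omega))
        rw [← hprev_eq] at hsupp
        rw [hD, Finset.mem_sdiff] at hprev
        exact hprev.2 hsupp
    have hIsupp : ∀ x ∈ arcF N a n, x ∈ suppB B := by
      intro x hx
      exact mem_supp_of_mem N (mem_maxElts.1 hI).1 (by rw [hIa]; exact hx)
    have hI'supp : ∀ x ∈ arcF N a' n', x ∈ suppB B := by
      intro x hx
      exact mem_supp_of_mem N (mem_maxElts.1 hI').1 (by rw [hIa']; exact hx)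
    have hwarc : w ∈ arcF N c g := by
      rw [← hrun]; exact compOf_self_mem N hwD
    have hw'arc : w' ∈ arcF N c g := by
      rw [← hrun, heq]; exact compOf_self_mem N hw'D
    have hwc : w = c := hleft w a n hn1 hnN hend hIsupp hwarc
    have hw'c : w' = c := hleft w' a' n' hn1' hnN' hend' hI'supp hw'arc
    -- so the two arcs share their last point
    have hlast : a + ((n - 1 : ℕ) : ZMod N) = a' + ((n' - 1 : ℕ) : ZMod N) := by
      have hww' : a + ((n : ℕ) : ZMod N) = a' + ((n' : ℕ) : ZMod N) := by
        rw [← hend, ← hend', hwc, hw'c]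
      have e1 : ((n : ℕ) : ZMod N) = ((n - 1 : ℕ) : ZMod N) + 1 := by
        rw [show (n : ℕ) = (n - 1) + 1 by omega]; push_cast; ring
      have e2 : ((n' : ℕ) : ZMod N) = ((n' - 1 : ℕ) : ZMod N) + 1 := by
        rw [show (n' : ℕ) = (n' - 1) + 1 by omega]; push_cast; ring
      rw [e1, e2] at hww'
      linear_combination hww'
    by_contra hne'
    have hsp := maxElts_spade N hB hI hI' hne'
    have hx1 : a + ((n - 1 : ℕ) : ZMod N) ∈ I := by
      rw [hIa]; exact mem_arcF_add N (by omega)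
    have hx2 : a + ((n - 1 : ℕ) : ZMod N) ∈ I' := by
      rw [hlast, hIa']; exact mem_arcF_add N (by omega)
    exact Finset.eq_empty_iff_forall_notMem.1 hsp.1 _ (Finset.mem_inter.2 ⟨hx1, hx2⟩)
  · -- surjective
    intro C hC
    obtain ⟨s, hs, rfl⟩ := (mem_comps N).1 hC
    obtain ⟨c, g, hg1, hgN, hrun, hsubD, hbl, hbr⟩ := comp_run N hDuniv hs
    have hclsupp : c - 1 ∈ suppB B := by
      by_contra h
      exact hbl (by rw [hD, Finset.mem_sdiff]; exact ⟨Finset.mem_univ _, h⟩)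
    rw [suppB, Finset.mem_biUnion] at hclsupp
    obtain ⟨K, hK, hcK⟩ := hclsupp
    obtain ⟨J, hJ, hKJ⟩ := exists_max_above N hB hK
    obtain ⟨a, n, hJa, hJc, hn1, hnN, hend⟩ := arcEnd_spec N hN3 hNodd hB (mem_maxElts.1 hJ).1
    have hcJ : c - 1 ∈ arcF N a n := by rw [← hJa]; exact hKJ hcK
    obtain ⟨k, hk, hkk⟩ := (mem_arcF N).1 hcJ
    have hceq : c = a + ((k + 1 : ℕ) : ZMod N) := by
      have : ((k + 1 : ℕ) : ZMod N) = ((k : ℕ) : ZMod N) + 1 := by push_cast; ring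
      rw [this]
      linear_combination hkk
    have hkn : k = n - 1 := by
      by_contra hkn
      have hcJ2 : c ∈ arcF N a n := by
        rw [hceq]; exact mem_arcF_add N (by omega)
      have hcsupp : c ∈ suppB B := by
        apply mem_supp_of_mem N (mem_maxElts.1 hJ).1
        rw [hJa]; exact hcJ2
      have hcD : c ∈ D := hsubD (self_mem_arcF N (by omega))
      rw [hD, Finset.mem_sdiff] at hcD
      exact hcD.2 hcsupp
    have hcend : arcEnd N J = c := by
      rw [hend, hceq]
      congr 2
      omega
    refine ⟨J, hJ, ?_⟩
    have hcC : c ∈ compOf (cadj N) D s := by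
      rw [hrun]; exact self_mem_arcF N (by omega)
    rw [hcend]
    exact (compOf_eq_of_mem N hcC).symm

end Bij

section SumChar
open Finset

lemma sum_char {α : Type} [DecidableEq α] (𝒞 : Finset (Finset α))
    (h1 : ∀ C ∈ 𝒞, 1 ≤ C.card) :
    ((∃ C ∈ 𝒞, C.card = 2 ∧ ∀ C' ∈ 𝒞, C' ≠ C → C'.card = 1) ↔
      ∑ C ∈ 𝒞, C.card = 𝒞.card + 1) := by
  constructor
  · rintro ⟨C, hC, hC2, hrest⟩
    rw [← Finset.add_sum_erase _ _ hC, hC2]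
    have : ∑ C' ∈ 𝒞.erase C, C'.card = ∑ C' ∈ 𝒞.erase C, 1 := by
      refine Finset.sum_congr rfl fun C' hC' => ?_
      rw [Finset.mem_erase] at hC'
      exact hrest C' hC'.2 hC'.1
    rw [this, Finset.sum_const, smul_eq_mul, mul_one, Finset.card_erase_of_mem hC]
    have : 1 ≤ 𝒞.card := Finset.card_pos.2 ⟨C, hC⟩
    omega
  · intro hsum
    have key : ∑ C ∈ 𝒞, (C.card - 1) = 1 := by
      have h2 : ∑ C ∈ 𝒞, ((C.card - 1) + 1) = ∑ C ∈ 𝒞, C.card := by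
        refine Finset.sum_congr rfl fun C hC => ?_
        have := h1 C hC
        omega
      rw [Finset.sum_add_distrib, Finset.sum_const, smul_eq_mul, mul_one] at h2
      omega
    have hex : ∃ C ∈ 𝒞, C.card - 1 ≠ 0 := by
      by_contra h
      push_neg at h
      rw [Finset.sum_congr rfl (fun C hC => h C hC), Finset.sum_const_zero] at key
      omega
    obtain ⟨C, hC, hCne⟩ := hex
    have hle : C.card - 1 ≤ 1 := by
      have h3 := Finset.single_le_sum (f := fun C : Finset α => C.card - 1)
        (fun _ _ => Nat.zero_le _) hC
      omega
    refine ⟨C, hC, by omega, ?_⟩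
    intro C' hC' hne
    have hsum2 : (C.card - 1) + ∑ x ∈ 𝒞.erase C, (x.card - 1) = 1 :=
      (Finset.add_sum_erase 𝒞 (fun x => x.card - 1) hC).trans key
    have hzero : ∑ x ∈ 𝒞.erase C, (x.card - 1) = 0 := by omega
    have := (Finset.sum_eq_zero_iff).1 hzero C' (Finset.mem_erase.2 ⟨hne, hC'⟩)
    have := h1 C' hC'
    omega

end SumChar

/-- for `∅ ≠ B ∈ phi`, `|B| = (N-1)/2` iff every connected component of
`S ∖ supp(B)` has cardinality 1, except exactly one, which has cardinality 2. -/
theorem statement12 (N : ℕ) [NeZero N] (hN : 3 ≤ N) (hodd : Odd N)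
    (B : Finset (Finset (ZMod N))) (hB : B ∈ phiSet (cadj N)) (hne : B ≠ ∅) :
    (B.card = (N - 1) / 2 ↔
      ∃ C ∈ comps (cadj N) (Finset.univ \ suppB B), C.card = 2 ∧
        ∀ C' ∈ comps (cadj N) (Finset.univ \ suppB B), C' ≠ C → C'.card = 1) := by
  have hBne : B.Nonempty := Finset.nonempty_iff_ne_empty.2 hne
  have h2B := count_master N hN hodd hB
  have hcompcard := comps_card_eq N hN hodd hB hBne
  have hsum := comps_sum_card N (Finset.univ \ suppB B)
  have hDcard : (Finset.univ \ suppB B).card = N - (suppB B).card := by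
    rw [Finset.card_sdiff_of_subset (Finset.subset_univ _), Finset.card_univ, ZMod.card N]
  have hsupple : (suppB B).card ≤ N := by
    have := Finset.card_le_univ (suppB B)
    rwa [ZMod.card N] at this
  have hM1 : 1 ≤ (maxElts B).card := by
    obtain ⟨I, hI⟩ := hBne
    obtain ⟨J, hJ, _⟩ := exists_max_above N hB hI
    exact Finset.card_pos.2 ⟨J, hJ⟩
  have hchar := sum_char (comps (cadj N) (Finset.univ \ suppB B))
    (fun C hC => Finset.card_pos.2 (comps_nonempty N hC))
  rw [hchar, hsum, hDcard, hcompcard]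
  obtain ⟨u, hu⟩ := hodd
  clear hchar hsum hDcard hcompcard hB hne hBne
  omega
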